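/- arXiv:2303.06227 — 11 statements merged into one kernel-verified Lean document; each statement's English description precedes it below -/
import Mathlib

section
/- Under consistency of the potential outcomes, positivity, and Assumptions (A5) (counterfactual offsetting effect) and (A6) (conditional counterfactual parallel trends with the neighboring controls), the inverse-probability-weighted functional identifies δ: E[ (e_T(X)/p_T) · ( 1{G=N}/e_N(X) − 1{G=C}/e_C(X) ) · ΔY ] = δ, where δ := E[(Y₁^{(1,1)} − Y₁^{(1,0)})·1{G=T}]/p_T. (Population version of Lemma 1: the IPW estimator is consistent for the negative offsetting effect δ.) -/
open MeasureTheory ProbabilityTheory Filter Topology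

/-- Group label: `T` = treated (`g(A)=(1,0)`), `N` = neighboring control (`g(A)=(0,1)`),
`C` = non-neighboring control (`g(A)=(0,0)`). -/
inductive GLabel : Type
  | T | N | C
  deriving DecidableEq

instance : MeasurableSpace GLabel := ⊤

/-- The σ-algebra `𝔛` generated by the covariates `X`. -/
def sigmaX {Ω : Type} {q : ℕ} (X : Ω → (Fin q → ℝ)) : MeasurableSpace Ω :=
  MeasurableSpace.comap X inferInstance

/-- The indicator `1{G = g}` as a real-valued function. -/
def indG {Ω : Type} (G : Ω → GLabel) (g : GLabel) (ω : Ω) : ℝ :=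
  if G ω = g then 1 else 0

/-- `f` is a version of the conditional expectation `E[Z ∣ G = g, X]`:
it is measurable and `E[Z·1{G=g} ∣ 𝔛] = f(X)·e_g(X)` `P`-a.s. -/
def IsCondVersion {Ω : Type} [MeasurableSpace Ω] (P : Measure Ω) {q : ℕ}
    (X : Ω → (Fin q → ℝ)) (G : Ω → GLabel) (e : GLabel → (Fin q → ℝ) → ℝ)
    (g : GLabel) (Z : Ω → ℝ) (f : (Fin q → ℝ) → ℝ) : Prop :=
  Measurable f ∧
    P[(fun ω => Z ω * indG G g ω) | sigmaX X] =ᵐ[P] (fun ω => f (X ω) * e g (X ω))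

/-- Pull-out property in integral form: for a bounded `m`-measurable weight `h` and an
integrable `Z` with `P[Z|m] =ᵐ v`, we have `∫ h·Z = ∫ h·v`. -/
lemma key_int {Ω : Type} [m0 : MeasurableSpace Ω] (P : Measure Ω) [IsProbabilityMeasure P]
    {m : MeasurableSpace Ω} (hm : m ≤ m0)
    {h Z v : Ω → ℝ} (hh : StronglyMeasurable[m] h) {c : ℝ} (hc : ∀ ω, ‖h ω‖ ≤ c)
    (hZ : Integrable Z P) (hv : P[Z | m] =ᵐ[P] v) :
    ∫ ω, h ω * Z ω ∂P = ∫ ω, h ω * v ω ∂P := by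
  haveI : SigmaFinite (P.trim hm) := IsFiniteMeasure.toSigmaFinite _
  have hint : Integrable (fun ω => h ω * Z ω) P :=
    hZ.bdd_mul ((hh.mono hm).aestronglyMeasurable) (Eventually.of_forall hc)
  have h1 : ∫ ω, h ω * Z ω ∂P = ∫ ω, (P[(fun ω => h ω * Z ω) | m]) ω ∂P :=
    (integral_condExp hm).symm
  have h2 : P[(fun ω => h ω * Z ω) | m] =ᵐ[P] fun ω => h ω * (P[Z | m]) ω := by
    have := condExp_mul_of_stronglyMeasurable_left (μ := P) hh hint hZ
    exact this
  have h3 : (fun ω => h ω * (P[Z | m]) ω) =ᵐ[P] fun ω => h ω * v ω :=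
    hv.mono fun ω hω => by simp [hω]
  rw [h1, integral_congr_ae (h2.trans h3)]

theorem stmt_0
    {Ω : Type} [MeasurableSpace Ω] (P : Measure Ω) [IsProbabilityMeasure P]
    {q : ℕ} (X : Ω → (Fin q → ℝ)) (hX : Measurable X)
    (G : Ω → GLabel) (hG : Measurable G)
    (Y0 Y1 : Ω → ℝ) (hY0 : Integrable Y0 P) (hY1 : Integrable Y1 P)
    (e : GLabel → (Fin q → ℝ) → ℝ) (he : ∀ g, Measurable (e g))
    (he1 : ∀ g x, e g x ≤ 1)
    (hprop : ∀ g : GLabel,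
      P[(fun ω => indG G g ω) | sigmaX X] =ᵐ[P] (fun ω => e g (X ω)))
    (ε : ℝ) (hε : 0 < ε) (hpos : ∀ g x, ε ≤ e g x)
    (hpT : 0 < (P {ω | G ω = GLabel.T}).toReal)
    (Y110 Y111 Y101 Y100 Y000 : Ω → ℝ)
    (hI10 : Integrable Y110 P) (hI11 : Integrable Y111 P)
    (hI01 : Integrable Y101 P) (hI00 : Integrable Y100 P) (hI000 : Integrable Y000 P)
    (hconsT : ∀ᵐ ω ∂P, G ω = GLabel.T → Y1 ω = Y110 ω)
    (hconsN : ∀ᵐ ω ∂P, G ω = GLabel.N → Y1 ω = Y101 ω)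
    (hconsC : ∀ᵐ ω ∂P, G ω = GLabel.C → Y1 ω = Y100 ω)
    (hcons0 : Y0 =ᵐ[P] Y000)
    (fT fN : (Fin q → ℝ) → ℝ)
    (hfT : IsCondVersion P X G e GLabel.T (fun ω => Y110 ω - Y111 ω) fT)
    (hfN : IsCondVersion P X G e GLabel.N (fun ω => Y101 ω - Y100 ω) fN)
    (hA5 : ∀ᵐ ω ∂P, fT (X ω) + fN (X ω) = 0)
    (gN gC : (Fin q → ℝ) → ℝ)
    (hgN : IsCondVersion P X G e GLabel.N (fun ω => Y100 ω - Y000 ω) gN)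
    (hgC : IsCondVersion P X G e GLabel.C (fun ω => Y100 ω - Y000 ω) gC)
    (hA6 : ∀ᵐ ω ∂P, gN (X ω) = gC (X ω))
    :
    ∫ ω, (e GLabel.T (X ω) / (P {ω | G ω = GLabel.T}).toReal) *
        (indG G GLabel.N ω / e GLabel.N (X ω) - indG G GLabel.C ω / e GLabel.C (X ω)) *
        (Y1 ω - Y0 ω) ∂P
      = (∫ ω, (Y111 ω - Y110 ω) * indG G GLabel.T ω ∂P) / (P {ω | G ω = GLabel.T}).toReal := by
  classical
  set pT := (P {ω | G ω = GLabel.T}).toReal with hpTdef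
  have hm : sigmaX X ≤ ‹MeasurableSpace Ω› := by
    intro s hs
    obtain ⟨t, ht, rfl⟩ := hs
    exact hX ht
  haveI : SigmaFinite (P.trim hm) := IsFiniteMeasure.toSigmaFinite _
  -- basic positivity facts
  have hepos : ∀ g x, 0 < e g x := fun g x => lt_of_lt_of_le hε (hpos g x)
  have hene : ∀ g x, e g x ≠ 0 := fun g x => (hepos g x).ne'
  -- X is measurable w.r.t. sigmaX X
  have hXm : @Measurable Ω _ (sigmaX X) _ X := fun s hs => ⟨s, hs, rfl⟩
  -- weights h_g = e_T/e_g ∘ X are sigmaX-strongly measurable and bounded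
  have hwm : ∀ g, StronglyMeasurable[sigmaX X] (fun ω => e GLabel.T (X ω) / e g (X ω)) :=
    fun g => (Measurable.stronglyMeasurable (((he GLabel.T).div (he g)).comp hXm))
  have hwb : ∀ g ω, ‖e GLabel.T (X ω) / e g (X ω)‖ ≤ 1 / ε := by
    intro g ω
    rw [Real.norm_eq_abs, abs_of_nonneg (div_nonneg (hepos _ _).le (hepos _ _).le)]
    exact div_le_div₀ zero_le_one (he1 _ _) hε (hpos _ _)
  -- indicator measurability and boundedness
  have hindm : ∀ g, Measurable (indG G g) := by
    intro g
    have hset : MeasurableSet {ω | G ω = g} := hG (show MeasurableSet {g} from trivial)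
    unfold indG
    exact Measurable.ite hset measurable_const measurable_const
  have hindb : ∀ g ω, ‖indG G g ω‖ ≤ 1 := by
    intro g ω; unfold indG; split <;> simp
  -- integrability of Z * 1{G=g}
  have hmulind : ∀ (Z : Ω → ℝ), Integrable Z P → ∀ g,
      Integrable (fun ω => Z ω * indG G g ω) P := by
    intro Z hZ g
    have := hZ.bdd_mul (hindm g).aestronglyMeasurable (Eventually.of_forall (hindb g))
    simpa [mul_comm] using this
  -- conditional expectation versions for the N and C arms of ΔY
  have hZN1 : Integrable (fun ω => (Y101 ω - Y100 ω) * indG G GLabel.N ω) P :=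
    hmulind _ (hI01.sub hI00) GLabel.N
  have hZN2 : Integrable (fun ω => (Y100 ω - Y000 ω) * indG G GLabel.N ω) P :=
    hmulind _ (hI00.sub hI000) GLabel.N
  have hZN : Integrable (fun ω => (Y1 ω - Y0 ω) * indG G GLabel.N ω) P :=
    hmulind _ (hY1.sub hY0) GLabel.N
  have hZC : Integrable (fun ω => (Y1 ω - Y0 ω) * indG G GLabel.C ω) P :=
    hmulind _ (hY1.sub hY0) GLabel.C
  have hZC1 : Integrable (fun ω => (Y100 ω - Y000 ω) * indG G GLabel.C ω) P :=
    hmulind _ (hI00.sub hI000) GLabel.C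
  -- decomposition on N
  have hNdec : (fun ω => (Y1 ω - Y0 ω) * indG G GLabel.N ω) =ᵐ[P]
      (fun ω => (Y101 ω - Y100 ω) * indG G GLabel.N ω
        + (Y100 ω - Y000 ω) * indG G GLabel.N ω) := by
    filter_upwards [hconsN, hcons0] with ω h1 h2
    by_cases hω : G ω = GLabel.N
    · simp only [indG, hω, if_pos rfl, mul_one, h1 hω, h2]; ring
    · simp [indG, hω]
  have hCdec : (fun ω => (Y1 ω - Y0 ω) * indG G GLabel.C ω) =ᵐ[P]
      (fun ω => (Y100 ω - Y000 ω) * indG G GLabel.C ω) := by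
    filter_upwards [hconsC, hcons0] with ω h1 h2
    by_cases hω : G ω = GLabel.C
    · simp only [indG, hω, if_pos rfl, mul_one, h1 hω, h2]
    · simp [indG, hω]
  have hCondN : P[(fun ω => (Y1 ω - Y0 ω) * indG G GLabel.N ω) | sigmaX X] =ᵐ[P]
      (fun ω => (fN (X ω) + gN (X ω)) * e GLabel.N (X ω)) := by
    refine (condExp_congr_ae hNdec).trans ?_
    refine ((condExp_add (m := sigmaX X) hZN1 hZN2).trans ?_)
    refine ((hfN.2.add hgN.2).trans ?_)
    exact Eventually.of_forall fun ω => by simp [Pi.add_apply]; ring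
  have hCondC : P[(fun ω => (Y1 ω - Y0 ω) * indG G GLabel.C ω) | sigmaX X] =ᵐ[P]
      (fun ω => gC (X ω) * e GLabel.C (X ω)) :=
    (condExp_congr_ae hCdec).trans hgC.2
  -- integral identities for the two arms
  have hIN : ∫ ω, (e GLabel.T (X ω) / e GLabel.N (X ω)) * ((Y1 ω - Y0 ω) * indG G GLabel.N ω) ∂P
      = ∫ ω, e GLabel.T (X ω) * (fN (X ω) + gN (X ω)) ∂P := by
    rw [key_int P hm (hwm GLabel.N) (hwb GLabel.N) hZN hCondN]
    refine integral_congr_ae (Eventually.of_forall fun ω => ?_)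
    have h0 : e GLabel.N (X ω) ≠ 0 := hene _ _
    field_simp
    try ring
  have hIC : ∫ ω, (e GLabel.T (X ω) / e GLabel.C (X ω)) * ((Y1 ω - Y0 ω) * indG G GLabel.C ω) ∂P
      = ∫ ω, e GLabel.T (X ω) * gC (X ω) ∂P := by
    rw [key_int P hm (hwm GLabel.C) (hwb GLabel.C) hZC hCondC]
    refine integral_congr_ae (Eventually.of_forall fun ω => ?_)
    have h0 : e GLabel.C (X ω) ≠ 0 := hene _ _
    field_simp
    try ring
  -- integrability of e_T(X)*f(X) for cond-version functions
  have hversint : ∀ (g : GLabel) (f : (Fin q → ℝ) → ℝ) (Z : Ω → ℝ),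
      Integrable Z P → IsCondVersion P X G e g Z f →
      Integrable (fun ω => e GLabel.T (X ω) * f (X ω)) P := by
    intro g f Z hZint hf
    have hv : Integrable (fun ω => f (X ω) * e g (X ω)) P :=
      (integrable_condExp).congr hf.2
    have := hv.bdd_mul ((hwm g).mono hm).aestronglyMeasurable (Eventually.of_forall (hwb g))
    refine this.congr (Eventually.of_forall fun ω => ?_)
    have h0 : e g (X ω) ≠ 0 := hene _ _
    field_simp
    try ring
  have hintfN := hversint GLabel.N fN _ (hI01.sub hI00) hfN
  have hintgN := hversint GLabel.N gN _ (hI00.sub hI000) hgN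
  have hintgC := hversint GLabel.C gC _ (hI00.sub hI000) hgC
  -- combine: ∫ e_T (fN+gN) - ∫ e_T gC = ∫ e_T fN
  have hsum : ∫ ω, e GLabel.T (X ω) * (fN (X ω) + gN (X ω)) ∂P
      = (∫ ω, e GLabel.T (X ω) * fN (X ω) ∂P) + ∫ ω, e GLabel.T (X ω) * gN (X ω) ∂P := by
    rw [← integral_add hintfN hintgN]
    exact integral_congr_ae (Eventually.of_forall fun ω => by ring)
  have hA6int : ∫ ω, e GLabel.T (X ω) * gN (X ω) ∂P
      = ∫ ω, e GLabel.T (X ω) * gC (X ω) ∂P := by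
    refine integral_congr_ae ?_
    filter_upwards [hA6] with ω hω
    rw [hω]
  -- the treated arm: ∫ (Y111 - Y110)·1_T = ∫ e_T fN
  have hT : ∫ ω, (Y111 ω - Y110 ω) * indG G GLabel.T ω ∂P
      = ∫ ω, e GLabel.T (X ω) * fN (X ω) ∂P := by
    have h1 : ∫ ω, (Y111 ω - Y110 ω) * indG G GLabel.T ω ∂P
        = - ∫ ω, (Y110 ω - Y111 ω) * indG G GLabel.T ω ∂P := by
      rw [← integral_neg]
      exact integral_congr_ae (Eventually.of_forall fun ω => by ring)
    have h2 : ∫ ω, (Y110 ω - Y111 ω) * indG G GLabel.T ω ∂P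
        = ∫ ω, fT (X ω) * e GLabel.T (X ω) ∂P := by
      rw [← integral_condExp (μ := P)
        (f := fun ω => (Y110 ω - Y111 ω) * indG G GLabel.T ω) hm]
      exact integral_congr_ae hfT.2
    rw [h1, h2, ← integral_neg]
    refine integral_congr_ae ?_
    filter_upwards [hA5] with ω hω
    have : fT (X ω) = -fN (X ω) := by linarith
    rw [this]; ring
  -- final assembly
  have hlhs : ∫ ω, (e GLabel.T (X ω) / pT) *
        (indG G GLabel.N ω / e GLabel.N (X ω) - indG G GLabel.C ω / e GLabel.C (X ω)) *
        (Y1 ω - Y0 ω) ∂P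
      = pT⁻¹ * ((∫ ω, (e GLabel.T (X ω) / e GLabel.N (X ω)) * ((Y1 ω - Y0 ω) * indG G GLabel.N ω) ∂P)
        - ∫ ω, (e GLabel.T (X ω) / e GLabel.C (X ω)) * ((Y1 ω - Y0 ω) * indG G GLabel.C ω) ∂P) := by
    have hintN : Integrable (fun ω =>
        (e GLabel.T (X ω) / e GLabel.N (X ω)) * ((Y1 ω - Y0 ω) * indG G GLabel.N ω)) P :=
      hZN.bdd_mul ((hwm GLabel.N).mono hm).aestronglyMeasurable (Eventually.of_forall (hwb GLabel.N))
    have hintC : Integrable (fun ω =>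
        (e GLabel.T (X ω) / e GLabel.C (X ω)) * ((Y1 ω - Y0 ω) * indG G GLabel.C ω)) P :=
      hZC.bdd_mul ((hwm GLabel.C).mono hm).aestronglyMeasurable (Eventually.of_forall (hwb GLabel.C))
    rw [← integral_sub hintN hintC, ← integral_const_mul]
    refine integral_congr_ae (Eventually.of_forall fun ω => ?_)
    have h0 : e GLabel.N (X ω) ≠ 0 := hene _ _
    have h1 : e GLabel.C (X ω) ≠ 0 := hene _ _
    have h2 : pT ≠ 0 := hpT.ne'
    field_simp
    try ring
  rw [hlhs, hIN, hIC, hsum, hA6int, hT]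
  have h2 : pT ≠ 0 := hpT.ne'
  field_simp
  try ring
end

section
/- Under consistency of the potential outcomes and Assumption (A6) (conditional counterfactual parallel trends with the neighboring controls), for any versions Δμ_N of E[ΔY ∣ G=N, X], Δμ_C of E[ΔY ∣ G=C, X], and f of E[Y₁^{(0,1)} − Y₁^{(0,0)} ∣ G=N, X], one has Δμ_N(X) − Δμ_C(X) = f(X) P-almost surely. (Identification of the conditional spillover effect on neighboring controls as the contrast of observed conditional outcome trends.) -/
open MeasureTheory ProbabilityTheory Filter Topology

theorem stmt_4
    {Ω : Type} [MeasurableSpace Ω] (P : Measure Ω) [IsProbabilityMeasure P]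
    {q : ℕ} (X : Ω → (Fin q → ℝ)) (hX : Measurable X)
    (G : Ω → GLabel) (hG : Measurable G)
    (Y0 Y1 : Ω → ℝ) (hY0 : Integrable Y0 P) (hY1 : Integrable Y1 P)
    (e : GLabel → (Fin q → ℝ) → ℝ) (he : ∀ g, Measurable (e g))
    (he1 : ∀ g x, e g x ≤ 1)
    (hprop : ∀ g : GLabel,
      P[(fun ω => indG G g ω) | sigmaX X] =ᵐ[P] (fun ω => e g (X ω)))
    (ε : ℝ) (hε : 0 < ε) (hpos : ∀ g x, ε ≤ e g x)
    (Y110 Y111 Y101 Y100 Y000 : Ω → ℝ)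
    (hI10 : Integrable Y110 P) (hI11 : Integrable Y111 P)
    (hI01 : Integrable Y101 P) (hI00 : Integrable Y100 P) (hI000 : Integrable Y000 P)
    (hconsT : ∀ᵐ ω ∂P, G ω = GLabel.T → Y1 ω = Y110 ω)
    (hconsN : ∀ᵐ ω ∂P, G ω = GLabel.N → Y1 ω = Y101 ω)
    (hconsC : ∀ᵐ ω ∂P, G ω = GLabel.C → Y1 ω = Y100 ω)
    (hcons0 : Y0 =ᵐ[P] Y000)
    (gN gC : (Fin q → ℝ) → ℝ)
    (hgN : IsCondVersion P X G e GLabel.N (fun ω => Y100 ω - Y000 ω) gN)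
    (hgC : IsCondVersion P X G e GLabel.C (fun ω => Y100 ω - Y000 ω) gC)
    (hA6 : ∀ᵐ ω ∂P, gN (X ω) = gC (X ω))
    (ΔμN ΔμC : (Fin q → ℝ) → ℝ)
    (hΔμN : IsCondVersion P X G e GLabel.N (fun ω => Y1 ω - Y0 ω) ΔμN)
    (hΔμC : IsCondVersion P X G e GLabel.C (fun ω => Y1 ω - Y0 ω) ΔμC)
    (f : (Fin q → ℝ) → ℝ)
    (hf : IsCondVersion P X G e GLabel.N (fun ω => Y101 ω - Y100 ω) f)
    :
    ∀ᵐ ω ∂P, ΔμN (X ω) - ΔμC (X ω) = f (X ω) := by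
  classical
  -- indicator measurability and integrability helpers
  have hind : ∀ g : GLabel, Measurable (indG G g) := by
    intro g
    unfold indG
    have hs : MeasurableSet {a | G a = g} := hG (show MeasurableSet {g} from trivial)
    exact Measurable.ite hs measurable_const measurable_const
  have hmul : ∀ (Z : Ω → ℝ), Integrable Z P → ∀ g : GLabel,
      Integrable (fun ω => Z ω * indG G g ω) P := by
    intro Z hZ g
    have : Integrable (fun ω => indG G g ω * Z ω) P := by
      refine hZ.bdd_mul (c := 1) (hind g).aestronglyMeasurable (Filter.Eventually.of_forall fun ω => ?_)
      unfold indG; split <;> simp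
    exact this.congr (Filter.Eventually.of_forall fun ω => mul_comm _ _)
  -- step 1: ΔμN = f + gN a.e. (in X)
  have hN : ∀ᵐ ω ∂P, ΔμN (X ω) = f (X ω) + gN (X ω) := by
    have hae : (fun ω => (Y1 ω - Y0 ω) * indG G GLabel.N ω) =ᵐ[P]
        (fun ω => (Y101 ω - Y100 ω) * indG G GLabel.N ω
          + (Y100 ω - Y000 ω) * indG G GLabel.N ω) := by
      filter_upwards [hconsN, hcons0] with ω h1 h0
      unfold indG
      by_cases h : G ω = GLabel.N
      · simp only [if_pos h, mul_one]; rw [h1 h, h0]; ring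
      · simp [h]
    have h1 : P[(fun ω => (Y1 ω - Y0 ω) * indG G GLabel.N ω) | sigmaX X] =ᵐ[P]
        (fun ω => f (X ω) * e GLabel.N (X ω) + gN (X ω) * e GLabel.N (X ω)) := by
      calc P[(fun ω => (Y1 ω - Y0 ω) * indG G GLabel.N ω) | sigmaX X]
          =ᵐ[P] P[(fun ω => (Y101 ω - Y100 ω) * indG G GLabel.N ω)
              + (fun ω => (Y100 ω - Y000 ω) * indG G GLabel.N ω) | sigmaX X] :=
            condExp_congr_ae hae
        _ =ᵐ[P] P[(fun ω => (Y101 ω - Y100 ω) * indG G GLabel.N ω) | sigmaX X]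
              + P[(fun ω => (Y100 ω - Y000 ω) * indG G GLabel.N ω) | sigmaX X] :=
            condExp_add (hmul _ (hI01.sub hI00) _) (hmul _ (hI00.sub hI000) _) _
        _ =ᵐ[P] _ := hf.2.add hgN.2
    have h2 := hΔμN.2.symm.trans h1
    filter_upwards [h2] with ω hω
    have hne : e GLabel.N (X ω) ≠ 0 := ne_of_gt (lt_of_lt_of_le hε (hpos _ _))
    have : (ΔμN (X ω) - (f (X ω) + gN (X ω))) * e GLabel.N (X ω) = 0 := by
      rw [sub_mul, add_mul]; rw [hω]; ring
    rcases mul_eq_zero.1 this with h | h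
    · linarith [sub_eq_zero.1 h]
    · exact absurd h hne
  -- step 2: ΔμC = gC a.e.
  have hC : ∀ᵐ ω ∂P, ΔμC (X ω) = gC (X ω) := by
    have hae : (fun ω => (Y1 ω - Y0 ω) * indG G GLabel.C ω) =ᵐ[P]
        (fun ω => (Y100 ω - Y000 ω) * indG G GLabel.C ω) := by
      filter_upwards [hconsC, hcons0] with ω h1 h0
      unfold indG
      by_cases h : G ω = GLabel.C
      · simp only [if_pos h, mul_one]; rw [h1 h, h0]
      · simp [h]
    have h2 := hΔμC.2.symm.trans ((condExp_congr_ae hae).trans hgC.2)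
    filter_upwards [h2] with ω hω
    have hne : e GLabel.C (X ω) ≠ 0 := ne_of_gt (lt_of_lt_of_le hε (hpos _ _))
    exact mul_right_cancel₀ hne hω
  filter_upwards [hN, hC, hA6] with ω h1 h2 h3
  rw [h1, h2, ← h3]; ring
end

section
/- Under consistency of the potential outcomes and Assumptions (A5) (counterfactual offsetting effect) and (A6) (conditional counterfactual parallel trends with the neighboring controls), for any versions Δμ_N of E[ΔY ∣ G=N, X], Δμ_C of E[ΔY ∣ G=C, X], and f of E[Y₁^{(1,1)} − Y₁^{(1,0)} ∣ G=T, X], one has Δμ_N(X) − Δμ_C(X) = f(X) P-almost surely. (Identification of the conditional negative offsetting effect on the treated.) -/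
open MeasureTheory ProbabilityTheory Filter Topology

theorem stmt_5
    {Ω : Type} [MeasurableSpace Ω] (P : Measure Ω) [IsProbabilityMeasure P]
    {q : ℕ} (X : Ω → (Fin q → ℝ)) (hX : Measurable X)
    (G : Ω → GLabel) (hG : Measurable G)
    (Y0 Y1 : Ω → ℝ) (hY0 : Integrable Y0 P) (hY1 : Integrable Y1 P)
    (e : GLabel → (Fin q → ℝ) → ℝ) (he : ∀ g, Measurable (e g))
    (he1 : ∀ g x, e g x ≤ 1)
    (hprop : ∀ g : GLabel,
      P[(fun ω => indG G g ω) | sigmaX X] =ᵐ[P] (fun ω => e g (X ω)))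
    (ε : ℝ) (hε : 0 < ε) (hpos : ∀ g x, ε ≤ e g x)
    (Y110 Y111 Y101 Y100 Y000 : Ω → ℝ)
    (hI10 : Integrable Y110 P) (hI11 : Integrable Y111 P)
    (hI01 : Integrable Y101 P) (hI00 : Integrable Y100 P) (hI000 : Integrable Y000 P)
    (hconsT : ∀ᵐ ω ∂P, G ω = GLabel.T → Y1 ω = Y110 ω)
    (hconsN : ∀ᵐ ω ∂P, G ω = GLabel.N → Y1 ω = Y101 ω)
    (hconsC : ∀ᵐ ω ∂P, G ω = GLabel.C → Y1 ω = Y100 ω)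
    (hcons0 : Y0 =ᵐ[P] Y000)
    (fT fN : (Fin q → ℝ) → ℝ)
    (hfT : IsCondVersion P X G e GLabel.T (fun ω => Y110 ω - Y111 ω) fT)
    (hfN : IsCondVersion P X G e GLabel.N (fun ω => Y101 ω - Y100 ω) fN)
    (hA5 : ∀ᵐ ω ∂P, fT (X ω) + fN (X ω) = 0)
    (gN gC : (Fin q → ℝ) → ℝ)
    (hgN : IsCondVersion P X G e GLabel.N (fun ω => Y100 ω - Y000 ω) gN)
    (hgC : IsCondVersion P X G e GLabel.C (fun ω => Y100 ω - Y000 ω) gC)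
    (hA6 : ∀ᵐ ω ∂P, gN (X ω) = gC (X ω))
    (ΔμN ΔμC : (Fin q → ℝ) → ℝ)
    (hΔμN : IsCondVersion P X G e GLabel.N (fun ω => Y1 ω - Y0 ω) ΔμN)
    (hΔμC : IsCondVersion P X G e GLabel.C (fun ω => Y1 ω - Y0 ω) ΔμC)
    (f : (Fin q → ℝ) → ℝ)
    (hf : IsCondVersion P X G e GLabel.T (fun ω => Y111 ω - Y110 ω) f)
    :
    ∀ᵐ ω ∂P, ΔμN (X ω) - ΔμC (X ω) = f (X ω) := by

  have hind : ∀ g, Measurable (indG G g) := by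
    intro g
    unfold indG
    exact Measurable.ite (hG (MeasurableSet.singleton g)) measurable_const measurable_const
  have hbd : ∀ g, ∃ C, ∀ ω, ‖indG G g ω‖ ≤ C := by
    intro g
    refine ⟨1, fun ω => ?_⟩
    simp only [indG]
    split <;> simp
  have hInt : ∀ (Z : Ω → ℝ), Integrable Z P → ∀ g,
      Integrable (fun ω => Z ω * indG G g ω) P := by
    intro Z hZ g
    simpa [mul_comm] using hZ.bdd_mul ((hind g).aestronglyMeasurable) (ae_of_all _ (hbd g).choose_spec)
  have hcancel : ∀ (g : GLabel) (f1 f2 : (Fin q → ℝ) → ℝ),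
      (fun ω => f1 (X ω) * e g (X ω)) =ᵐ[P] (fun ω => f2 (X ω) * e g (X ω)) →
      ∀ᵐ ω ∂P, f1 (X ω) = f2 (X ω) := by
    intro g f1 f2 h
    filter_upwards [h] with ω hω
    have hne : e g (X ω) ≠ 0 := by exact (lt_of_lt_of_le hε (hpos g (X ω))).ne'
    exact mul_right_cancel₀ hne hω
  -- N group
  have hNeq : (fun ω => (Y1 ω - Y0 ω) * indG G GLabel.N ω) =ᵐ[P]
      (fun ω => ((Y101 ω - Y100 ω) + (Y100 ω - Y000 ω)) * indG G GLabel.N ω) := by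
    filter_upwards [hconsN, hcons0] with ω h1 h0
    by_cases h : G ω = GLabel.N
    · simp only [indG, if_pos h, h1 h, h0]; ring
    · simp [indG, h]
  have hsum : (fun ω => ((Y101 ω - Y100 ω) + (Y100 ω - Y000 ω)) * indG G GLabel.N ω)
      = (fun ω => (Y101 ω - Y100 ω) * indG G GLabel.N ω)
        + (fun ω => (Y100 ω - Y000 ω) * indG G GLabel.N ω) := by
    funext ω; simp only [Pi.add_apply]; ring
  have hN1 : (fun ω => ΔμN (X ω) * e GLabel.N (X ω)) =ᵐ[P]
      (fun ω => (fN (X ω) + gN (X ω)) * e GLabel.N (X ω)) := by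
    have h1 := (condExp_congr_ae (m := sigmaX X) hNeq)
    rw [hsum] at h1
    have h2 := condExp_add (m := sigmaX X) (μ := P)
      (hInt _ (hI01.sub hI00) GLabel.N) (hInt _ (hI00.sub hI000) GLabel.N)
    have h3 : P[(fun ω => (Y1 ω - Y0 ω) * indG G GLabel.N ω) | sigmaX X] =ᵐ[P]
        (fun ω => fN (X ω) * e GLabel.N (X ω) + gN (X ω) * e GLabel.N (X ω)) :=
      (h1.trans h2).trans (hfN.2.add hgN.2)
    refine (hΔμN.2.symm.trans h3).trans ?_
    filter_upwards with ω
    ring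
  have hNfin : ∀ᵐ ω ∂P, ΔμN (X ω) = fN (X ω) + gN (X ω) :=
    hcancel GLabel.N ΔμN (fun x => fN x + gN x) hN1
  -- C group
  have hCeq : (fun ω => (Y1 ω - Y0 ω) * indG G GLabel.C ω) =ᵐ[P]
      (fun ω => (Y100 ω - Y000 ω) * indG G GLabel.C ω) := by
    filter_upwards [hconsC, hcons0] with ω h1 h0
    by_cases h : G ω = GLabel.C
    · simp only [indG, if_pos h, h1 h, h0]
    · simp [indG, h]
  have hCfin : ∀ᵐ ω ∂P, ΔμC (X ω) = gC (X ω) := by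
    refine hcancel GLabel.C _ _ ?_
    exact hΔμC.2.symm.trans ((condExp_congr_ae (m := sigmaX X) hCeq).trans hgC.2)
  -- T group
  have hTeq : (fun ω => (Y111 ω - Y110 ω) * indG G GLabel.T ω)
      = (fun ω => -((Y110 ω - Y111 ω) * indG G GLabel.T ω)) := by
    funext ω; ring
  have hTfin : ∀ᵐ ω ∂P, f (X ω) = -fT (X ω) := by
    refine hcancel GLabel.T f (fun x => -fT x) ?_
    have h1 : P[(fun ω => (Y111 ω - Y110 ω) * indG G GLabel.T ω) | sigmaX X] =ᵐ[P]
        (fun ω => -(fT (X ω) * e GLabel.T (X ω))) := by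
      rw [hTeq, show (fun ω => -((Y110 ω - Y111 ω) * indG G GLabel.T ω))
        = -(fun ω => (Y110 ω - Y111 ω) * indG G GLabel.T ω) from rfl]
      refine (condExp_neg _ _).trans ?_
      filter_upwards [hfT.2] with ω hω
      simp [Pi.neg_apply, hω]
    refine (hf.2.symm.trans h1).trans ?_
    filter_upwards with ω
    ring
  filter_upwards [hNfin, hCfin, hTfin, hA5, hA6] with ω h1 h2 h3 h4 h5
  rw [h1, h2, h3, ← h5]
  linarith
end

section
/- Under consistency of the potential outcomes and Assumptions (A5) and (A6), for any versions Δμ_N of E[ΔY ∣ G=N, X] and Δμ_C of E[ΔY ∣ G=C, X], δ := E[(Y₁^{(1,1)} − Y₁^{(1,0)})·1{G=T}]/p_T = E[ (e_T(X)/p_T) · (Δμ_N(X) − Δμ_C(X)) ]. (Representation of δ as the treated-group average of the contrast of conditional outcome trends, used at the start of the proof of Theorem 2.) -/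
open MeasureTheory ProbabilityTheory Filter Topology

theorem stmt_6
    {Ω : Type} [MeasurableSpace Ω] (P : Measure Ω) [IsProbabilityMeasure P]
    {q : ℕ} (X : Ω → (Fin q → ℝ)) (hX : Measurable X)
    (G : Ω → GLabel) (hG : Measurable G)
    (Y0 Y1 : Ω → ℝ) (hY0 : Integrable Y0 P) (hY1 : Integrable Y1 P)
    (e : GLabel → (Fin q → ℝ) → ℝ) (he : ∀ g, Measurable (e g))
    (he1 : ∀ g x, e g x ≤ 1)
    (hprop : ∀ g : GLabel,
      P[(fun ω => indG G g ω) | sigmaX X] =ᵐ[P] (fun ω => e g (X ω)))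
    (ε : ℝ) (hε : 0 < ε) (hpos : ∀ g x, ε ≤ e g x)
    (hpT : 0 < (P {ω | G ω = GLabel.T}).toReal)
    (Y110 Y111 Y101 Y100 Y000 : Ω → ℝ)
    (hI10 : Integrable Y110 P) (hI11 : Integrable Y111 P)
    (hI01 : Integrable Y101 P) (hI00 : Integrable Y100 P) (hI000 : Integrable Y000 P)
    (hconsT : ∀ᵐ ω ∂P, G ω = GLabel.T → Y1 ω = Y110 ω)
    (hconsN : ∀ᵐ ω ∂P, G ω = GLabel.N → Y1 ω = Y101 ω)
    (hconsC : ∀ᵐ ω ∂P, G ω = GLabel.C → Y1 ω = Y100 ω)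
    (hcons0 : Y0 =ᵐ[P] Y000)
    (fT fN : (Fin q → ℝ) → ℝ)
    (hfT : IsCondVersion P X G e GLabel.T (fun ω => Y110 ω - Y111 ω) fT)
    (hfN : IsCondVersion P X G e GLabel.N (fun ω => Y101 ω - Y100 ω) fN)
    (hA5 : ∀ᵐ ω ∂P, fT (X ω) + fN (X ω) = 0)
    (gN gC : (Fin q → ℝ) → ℝ)
    (hgN : IsCondVersion P X G e GLabel.N (fun ω => Y100 ω - Y000 ω) gN)
    (hgC : IsCondVersion P X G e GLabel.C (fun ω => Y100 ω - Y000 ω) gC)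
    (hA6 : ∀ᵐ ω ∂P, gN (X ω) = gC (X ω))
    (ΔμN ΔμC : (Fin q → ℝ) → ℝ)
    (hΔμN : IsCondVersion P X G e GLabel.N (fun ω => Y1 ω - Y0 ω) ΔμN)
    (hΔμC : IsCondVersion P X G e GLabel.C (fun ω => Y1 ω - Y0 ω) ΔμC)
    :
    (∫ ω, (Y111 ω - Y110 ω) * indG G GLabel.T ω ∂P) / (P {ω | G ω = GLabel.T}).toReal
      = ∫ ω, (e GLabel.T (X ω) / (P {ω | G ω = GLabel.T}).toReal) * (ΔμN (X ω) - ΔμC (X ω)) ∂P := by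
  classical
  have hm : sigmaX X ≤ ‹MeasurableSpace Ω› := hX.comap_le
  -- integrability of products with indicators
  have hind : ∀ (Z : Ω → ℝ), Integrable Z P → ∀ g : GLabel,
      Integrable (fun ω => Z ω * indG G g ω) P := by
    intro Z hZ g
    have hs : MeasurableSet (G ⁻¹' {g}) := hG MeasurableSpace.measurableSet_top
    have hEq : (fun ω => Z ω * indG G g ω) = Set.indicator (G ⁻¹' {g}) Z := by
      funext ω
      by_cases h : G ω = g <;> simp [indG, Set.indicator, h]
    rw [hEq]
    exact hZ.indicator hs
  -- cancellation of the (strictly positive) propensity score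
  have hcancel : ∀ (g : GLabel) (a b : (Fin q → ℝ) → ℝ),
      (fun ω => a (X ω) * e g (X ω)) =ᵐ[P] (fun ω => b (X ω) * e g (X ω)) →
      (fun ω => a (X ω)) =ᵐ[P] (fun ω => b (X ω)) := by
    intro g a b h
    filter_upwards [h] with ω hω
    have hne : e g (X ω) ≠ 0 := ne_of_gt (lt_of_lt_of_le hε (hpos g (X ω)))
    exact mul_right_cancel₀ hne hω
  -- a.e. decomposition of ΔY·1{G=N}
  have hNae : (fun ω => (Y1 ω - Y0 ω) * indG G GLabel.N ω) =ᵐ[P]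
      (fun ω => (Y101 ω - Y100 ω) * indG G GLabel.N ω
        + (Y100 ω - Y000 ω) * indG G GLabel.N ω) := by
    filter_upwards [hconsN, hcons0] with ω h1 h0
    by_cases h : G ω = GLabel.N
    · simp only [indG, if_pos h, mul_one, h1 h, h0]; ring
    · simp [indG, h]
  -- a.e. decomposition of ΔY·1{G=C}
  have hCae : (fun ω => (Y1 ω - Y0 ω) * indG G GLabel.C ω) =ᵐ[P]
      (fun ω => (Y100 ω - Y000 ω) * indG G GLabel.C ω) := by
    filter_upwards [hconsC, hcons0] with ω h1 h0
    by_cases h : G ω = GLabel.C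
    · simp only [indG, if_pos h, mul_one, h1 h, h0]
    · simp [indG, h]
  -- conditional expectation identity for N
  have hCEN : (fun ω => ΔμN (X ω) * e GLabel.N (X ω)) =ᵐ[P]
      (fun ω => (fN (X ω) + gN (X ω)) * e GLabel.N (X ω)) := by
    have hadd : P[(fun ω => (Y101 ω - Y100 ω) * indG G GLabel.N ω
          + (Y100 ω - Y000 ω) * indG G GLabel.N ω) | sigmaX X] =ᵐ[P]
        P[(fun ω => (Y101 ω - Y100 ω) * indG G GLabel.N ω) | sigmaX X]
          + P[(fun ω => (Y100 ω - Y000 ω) * indG G GLabel.N ω) | sigmaX X] :=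
      condExp_add (hind _ (hI01.sub hI00) GLabel.N) (hind _ (hI00.sub hI000) GLabel.N) (sigmaX X)
    have h1 := hΔμN.2.symm.trans
      ((condExp_congr_ae (m := sigmaX X) hNae).trans (hadd.trans (hfN.2.add hgN.2)))
    filter_upwards [h1] with ω hω
    rw [hω]; simp [add_mul]
  -- conditional expectation identity for C
  have hCEC : (fun ω => ΔμC (X ω) * e GLabel.C (X ω)) =ᵐ[P]
      (fun ω => gC (X ω) * e GLabel.C (X ω)) :=
    hΔμC.2.symm.trans ((condExp_congr_ae (m := sigmaX X) hCae).trans hgC.2)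
  -- key a.e. identity : ΔμN − ΔμC = fN
  have key : (fun ω => ΔμN (X ω) - ΔμC (X ω)) =ᵐ[P] (fun ω => fN (X ω)) := by
    filter_upwards [hcancel GLabel.N ΔμN (fun x => fN x + gN x) hCEN, hcancel GLabel.C ΔμC gC hCEC, hA6] with ω h1 h2 h3
    have h1' : ΔμN (X ω) = fN (X ω) + gN (X ω) := h1
    have h2' : ΔμC (X ω) = gC (X ω) := h2
    rw [h1', h2', h3]; ring
  -- LHS numerator equals ∫ fN(X)·e_T(X)
  have hL1 : ∫ ω, (Y111 ω - Y110 ω) * indG G GLabel.T ω ∂P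
      = - ∫ ω, (Y110 ω - Y111 ω) * indG G GLabel.T ω ∂P := by
    rw [← integral_neg]
    congr 1; funext ω; ring
  have hL2 : ∫ ω, (Y110 ω - Y111 ω) * indG G GLabel.T ω ∂P
      = ∫ ω, fT (X ω) * e GLabel.T (X ω) ∂P := by
    rw [← integral_condExp (f := fun ω => (Y110 ω - Y111 ω) * indG G GLabel.T ω) hm]
    exact integral_congr_ae hfT.2
  have hL3 : ∫ ω, fT (X ω) * e GLabel.T (X ω) ∂P
      = - ∫ ω, fN (X ω) * e GLabel.T (X ω) ∂P := by
    rw [← integral_neg]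
    apply integral_congr_ae
    filter_upwards [hA5] with ω h
    have hft : fT (X ω) = - fN (X ω) := by linarith
    rw [hft]; ring
  -- RHS
  have hR : ∫ ω, (e GLabel.T (X ω) / (P {ω | G ω = GLabel.T}).toReal)
        * (ΔμN (X ω) - ΔμC (X ω)) ∂P
      = (∫ ω, fN (X ω) * e GLabel.T (X ω) ∂P) / (P {ω | G ω = GLabel.T}).toReal := by
    rw [← integral_div]
    apply integral_congr_ae
    filter_upwards [key] with ω hω
    rw [show ΔμN (X ω) - ΔμC (X ω) = fN (X ω) from hω]
    ring
  rw [hL1, hL2, hL3, neg_neg, hR]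
end

section
/- (Population version of Theorem 1, correctly specified outcome regression.) Let Δμ_N and Δμ_C be versions of E[ΔY ∣ G=N, X] and E[ΔY ∣ G=C, X], and let ê_T : ℝ^q → [0,1] and ê_N, ê_C : ℝ^q → [ε, 1] be arbitrary measurable functions (possibly misspecified propensity models). Under consistency of the potential outcomes and Assumptions (A5) and (A6), the doubly-robust functional E[ (ê_T(X)/p_T)·(1{G=N}/ê_N(X))·(ΔY − Δμ_N(X)) + (1{G=T}/p_T)·Δμ_N(X) ] − E[ (ê_T(X)/p_T)·(1{G=C}/ê_C(X))·(ΔY − Δμ_C(X)) + (1{G=T}/p_T)·Δμ_C(X) ] equals δ := E[(Y₁^{(1,1)} − Y₁^{(1,0)})·1{G=T}]/p_T. -/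
open MeasureTheory ProbabilityTheory Filter Topology

set_option linter.unusedSectionVars false
set_option linter.unusedVariables false

section Helpers

variable {Ω : Type} [MeasurableSpace Ω] {P : Measure Ω} [IsProbabilityMeasure P]
  {q : ℕ} {X : Ω → (Fin q → ℝ)} {G : Ω → GLabel}

lemma measurable_indG (hG : Measurable G) (g : GLabel) : Measurable (indG G g) := by
  unfold indG
  exact Measurable.ite (show MeasurableSet {a | G a = g} from hG (measurableSet_singleton g))
    measurable_const measurable_const

lemma abs_indG_le (g : GLabel) (ω : Ω) : ‖indG G g ω‖ ≤ 1 := by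
  unfold indG; split <;> simp

lemma integrable_indG (hG : Measurable G) (g : GLabel) : Integrable (indG G g) P :=
  Integrable.mono' (integrable_const 1) ((measurable_indG hG g).aestronglyMeasurable)
    (Filter.Eventually.of_forall fun ω => abs_indG_le g ω)

lemma MeasureTheory.Integrable.mul_indG {Z : Ω → ℝ} (hZ : Integrable Z P) (hG : Measurable G) (g : GLabel) :
    Integrable (fun ω => Z ω * indG G g ω) P := by
  refine Integrable.mono' hZ.norm
    (hZ.aestronglyMeasurable.mul (measurable_indG hG g).aestronglyMeasurable)
    (Filter.Eventually.of_forall fun ω => ?_)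
  rw [norm_mul]
  calc ‖Z ω‖ * ‖indG G g ω‖ ≤ ‖Z ω‖ * 1 :=
        mul_le_mul_of_nonneg_left (abs_indG_le g ω) (norm_nonneg _)
    _ = ‖Z ω‖ := mul_one _

/-- Pull-out + total expectation: `∫ u·Z = ∫ u·E[Z|𝔛]` for `𝔛`-measurable `u`. -/
lemma integral_mul_eq (hX : Measurable X) {u Z : Ω → ℝ}
    (hu : Measurable[sigmaX X] u) (hZ : Integrable Z P)
    (huZ : Integrable (fun ω => u ω * Z ω) P) :
    ∫ ω, u ω * Z ω ∂P = ∫ ω, u ω * (P[Z | sigmaX X]) ω ∂P := by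
  have hm : sigmaX X ≤ _ := hX.comap_le
  have h1 : P[(fun ω => u ω * Z ω) | sigmaX X] =ᵐ[P]
      (fun ω => u ω * (P[Z | sigmaX X]) ω) :=
    condExp_mul_of_stronglyMeasurable_left hu.stronglyMeasurable huZ hZ
  calc ∫ ω, u ω * Z ω ∂P
      = ∫ ω, (P[(fun ω => u ω * Z ω) | sigmaX X]) ω ∂P := (integral_condExp hm).symm
    _ = ∫ ω, u ω * (P[Z | sigmaX X]) ω ∂P := integral_congr_ae h1

lemma measurable_sigmaX_comp (hX : Measurable X) {f : (Fin q → ℝ) → ℝ} (hf : Measurable f) :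
    Measurable[sigmaX X] (fun ω => f (X ω)) := by
  have hXm : Measurable[sigmaX X] X := fun s hs => ⟨s, hs, rfl⟩
  exact hf.comp hXm

lemma version_integrable (hX : Measurable X) {e : GLabel → (Fin q → ℝ) → ℝ}
    {ε : ℝ} (hε : 0 < ε) (hpos : ∀ g x, ε ≤ e g x)
    {g : GLabel} {Z : Ω → ℝ} {f : (Fin q → ℝ) → ℝ}
    (hv : IsCondVersion P X G e g Z f) :
    Integrable (fun ω => f (X ω)) P := by
  have h2 : Integrable (fun ω => f (X ω) * e g (X ω)) P :=
    (integrable_condExp).congr hv.2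
  refine Integrable.mono' (h2.norm.const_mul ε⁻¹)
    ((hv.1.comp hX).aestronglyMeasurable)
    (Filter.Eventually.of_forall fun ω => ?_)
  have hepos : 0 < e g (X ω) := lt_of_lt_of_le hε (hpos g (X ω))
  rw [Real.norm_eq_abs, Real.norm_eq_abs, abs_mul, abs_of_pos hepos]
  have key : ε * |f (X ω)| ≤ |f (X ω)| * e g (X ω) := by
    rw [mul_comm]
    exact mul_le_mul_of_nonneg_left (hpos g (X ω)) (abs_nonneg _)
  calc |f (X ω)| = ε⁻¹ * (ε * |f (X ω)|) := by field_simp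
    _ ≤ ε⁻¹ * (|f (X ω)| * e g (X ω)) :=
        mul_le_mul_of_nonneg_left key (le_of_lt (inv_pos.mpr hε))

end Helpers

theorem stmt_7
    {Ω : Type} [MeasurableSpace Ω] (P : Measure Ω) [IsProbabilityMeasure P]
    {q : ℕ} (X : Ω → (Fin q → ℝ)) (hX : Measurable X)
    (G : Ω → GLabel) (hG : Measurable G)
    (Y0 Y1 : Ω → ℝ) (hY0 : Integrable Y0 P) (hY1 : Integrable Y1 P)
    (e : GLabel → (Fin q → ℝ) → ℝ) (he : ∀ g, Measurable (e g))
    (he1 : ∀ g x, e g x ≤ 1)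
    (hprop : ∀ g : GLabel,
      P[(fun ω => indG G g ω) | sigmaX X] =ᵐ[P] (fun ω => e g (X ω)))
    (ε : ℝ) (hε : 0 < ε) (hpos : ∀ g x, ε ≤ e g x)
    (hpT : 0 < (P {ω | G ω = GLabel.T}).toReal)
    (Y110 Y111 Y101 Y100 Y000 : Ω → ℝ)
    (hI10 : Integrable Y110 P) (hI11 : Integrable Y111 P)
    (hI01 : Integrable Y101 P) (hI00 : Integrable Y100 P) (hI000 : Integrable Y000 P)
    (hconsT : ∀ᵐ ω ∂P, G ω = GLabel.T → Y1 ω = Y110 ω)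
    (hconsN : ∀ᵐ ω ∂P, G ω = GLabel.N → Y1 ω = Y101 ω)
    (hconsC : ∀ᵐ ω ∂P, G ω = GLabel.C → Y1 ω = Y100 ω)
    (hcons0 : Y0 =ᵐ[P] Y000)
    (fT fN : (Fin q → ℝ) → ℝ)
    (hfT : IsCondVersion P X G e GLabel.T (fun ω => Y110 ω - Y111 ω) fT)
    (hfN : IsCondVersion P X G e GLabel.N (fun ω => Y101 ω - Y100 ω) fN)
    (hA5 : ∀ᵐ ω ∂P, fT (X ω) + fN (X ω) = 0)
    (gN gC : (Fin q → ℝ) → ℝ)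
    (hgN : IsCondVersion P X G e GLabel.N (fun ω => Y100 ω - Y000 ω) gN)
    (hgC : IsCondVersion P X G e GLabel.C (fun ω => Y100 ω - Y000 ω) gC)
    (hA6 : ∀ᵐ ω ∂P, gN (X ω) = gC (X ω))
    (ΔμN ΔμC : (Fin q → ℝ) → ℝ)
    (hΔμN : IsCondVersion P X G e GLabel.N (fun ω => Y1 ω - Y0 ω) ΔμN)
    (hΔμC : IsCondVersion P X G e GLabel.C (fun ω => Y1 ω - Y0 ω) ΔμC)
    (eTh eNh eCh : (Fin q → ℝ) → ℝ)
    (heTh : Measurable eTh) (heNh : Measurable eNh) (heCh : Measurable eCh)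
    (heTh01 : ∀ x, 0 ≤ eTh x ∧ eTh x ≤ 1)
    (heNhε : ∀ x, ε ≤ eNh x ∧ eNh x ≤ 1)
    (heChε : ∀ x, ε ≤ eCh x ∧ eCh x ≤ 1)
    :
    (∫ ω, (eTh (X ω) / (P {ω | G ω = GLabel.T}).toReal) * (indG G GLabel.N ω / eNh (X ω)) *
          ((Y1 ω - Y0 ω) - ΔμN (X ω))
        + (indG G GLabel.T ω / (P {ω | G ω = GLabel.T}).toReal) * ΔμN (X ω) ∂P)
      - (∫ ω, (eTh (X ω) / (P {ω | G ω = GLabel.T}).toReal) * (indG G GLabel.C ω / eCh (X ω)) *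
          ((Y1 ω - Y0 ω) - ΔμC (X ω))
        + (indG G GLabel.T ω / (P {ω | G ω = GLabel.T}).toReal) * ΔμC (X ω) ∂P)
      = (∫ ω, (Y111 ω - Y110 ω) * indG G GLabel.T ω ∂P) / (P {ω | G ω = GLabel.T}).toReal := by
  classical
  set pT := (P {ω | G ω = GLabel.T}).toReal with hpTdef
  have hm : sigmaX X ≤ _ := hX.comap_le
  have hDN : Integrable (fun ω => ΔμN (X ω)) P := version_integrable hX hε hpos hΔμN
  have hDC : Integrable (fun ω => ΔμC (X ω)) P := version_integrable hX hε hpos hΔμC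
  have hfTint : Integrable (fun ω => fT (X ω)) P := version_integrable hX hε hpos hfT
  -- the augmentation terms are integrable with zero integral
  have aug : ∀ (g : GLabel) (eh : (Fin q → ℝ) → ℝ), Measurable eh →
      (∀ x, ε ≤ eh x ∧ eh x ≤ 1) → ∀ (Δμ : (Fin q → ℝ) → ℝ),
      IsCondVersion P X G e g (fun ω => Y1 ω - Y0 ω) Δμ →
      Integrable (fun ω => (eTh (X ω) / pT) * (indG G g ω / eh (X ω)) *
        ((Y1 ω - Y0 ω) - Δμ (X ω))) P ∧
      ∫ ω, (eTh (X ω) / pT) * (indG G g ω / eh (X ω)) * ((Y1 ω - Y0 ω) - Δμ (X ω)) ∂P = 0 := by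
    intro g eh heh hehε Δμ hΔμ
    have hΔint : Integrable (fun ω => Δμ (X ω)) P := version_integrable hX hε hpos hΔμ
    have hΔ2 : P[(fun ω => (Y1 ω - Y0 ω) * indG G g ω) | sigmaX X] =ᵐ[P]
        (fun ω => Δμ (X ω) * e g (X ω)) := hΔμ.2
    set u : Ω → ℝ := fun ω => eTh (X ω) / (pT * eh (X ω)) with hu_def
    set Z : Ω → ℝ := fun ω => ((Y1 ω - Y0 ω) - Δμ (X ω)) * indG G g ω with hZ_def
    have hpt : ∀ ω, (eTh (X ω) / pT) * (indG G g ω / eh (X ω)) *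
        ((Y1 ω - Y0 ω) - Δμ (X ω)) = u ω * Z ω := by
      intro ω; simp only [hu_def, hZ_def]; ring
    have hZint : Integrable Z P :=
      Integrable.mul_indG (Z := fun ω => (Y1 ω - Y0 ω) - Δμ (X ω))
        ((hY1.sub hY0).sub hΔint) hG g
    have hubd : ∀ ω, ‖u ω‖ ≤ 1 / (pT * ε) := by
      intro ω
      have hb : pT * ε ≤ pT * eh (X ω) := mul_le_mul_of_nonneg_left (hehε (X ω)).1 hpT.le
      have hd : (0:ℝ) < pT * ε := mul_pos hpT hε
      show ‖eTh (X ω) / (pT * eh (X ω))‖ ≤ 1 / (pT * ε)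
      rw [Real.norm_eq_abs, abs_div, abs_of_nonneg (heTh01 (X ω)).1,
        abs_of_pos (lt_of_lt_of_le hd hb)]
      exact div_le_div₀ zero_le_one (heTh01 (X ω)).2 hd hb
    have hum : Measurable[sigmaX X] u :=
      measurable_sigmaX_comp hX (heTh.div (measurable_const.mul heh))
    have huZ : Integrable (fun ω => u ω * Z ω) P :=
      hZint.bdd_mul
        (((heTh.comp hX).div (measurable_const.mul (heh.comp hX))).aestronglyMeasurable)
        (Filter.Eventually.of_forall hubd)
    have hZ0 : P[Z | sigmaX X] =ᵐ[P] (fun _ => (0:ℝ)) := by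
      have hs : Z = (fun ω => (Y1 ω - Y0 ω) * indG G g ω) -
          ((fun ω => Δμ (X ω)) * indG G g) := by
        funext ω
        simp only [hZ_def, Pi.sub_apply, Pi.mul_apply]
        ring
      have hsub := condExp_sub (μ := P) (m := sigmaX X)
        (f := fun ω => (Y1 ω - Y0 ω) * indG G g ω)
        (g := (fun ω => Δμ (X ω)) * indG G g)
        (Integrable.mul_indG (Z := fun ω => Y1 ω - Y0 ω) (hY1.sub hY0) hG g)
        (Integrable.mul_indG (Z := fun ω => Δμ (X ω)) hΔint hG g)
      have hmul := condExp_mul_of_stronglyMeasurable_left (μ := P)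
        (f := fun ω => Δμ (X ω)) (g := indG G g)
        ((measurable_sigmaX_comp hX hΔμ.1).stronglyMeasurable)
        (Integrable.mul_indG (Z := fun ω => Δμ (X ω)) hΔint hG g)
        (integrable_indG hG g)
      have hpg : P[indG G g | sigmaX X] =ᵐ[P] (fun ω => e g (X ω)) := hprop g
      rw [hs]
      filter_upwards [hsub, hΔ2, hmul, hpg] with ω h1 h2 h3 h4
      simp only [Pi.sub_apply, Pi.mul_apply] at h1 h3 ⊢
      rw [h1, h2, h3, h4]
      ring
    constructor
    · exact huZ.congr (Filter.Eventually.of_forall fun ω => (hpt ω).symm)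
    · rw [integral_congr_ae (Filter.Eventually.of_forall hpt),
        integral_mul_eq hX hum hZint huZ,
        integral_congr_ae (hZ0.mono fun ω h => by rw [h, mul_zero])]
      simp
  obtain ⟨hiN, hzN⟩ := aug GLabel.N eNh heNh heNhε ΔμN hΔμN
  obtain ⟨hiC, hzC⟩ := aug GLabel.C eCh heCh heChε ΔμC hΔμC
  have hiTN : Integrable (fun ω => indG G GLabel.T ω / pT * ΔμN (X ω)) P :=
    ((hDN.mul_indG hG GLabel.T).const_mul pT⁻¹).congr
      (Filter.Eventually.of_forall fun ω => by ring)
  have hiTC : Integrable (fun ω => indG G GLabel.T ω / pT * ΔμC (X ω)) P :=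
    ((hDC.mul_indG hG GLabel.T).const_mul pT⁻¹).congr
      (Filter.Eventually.of_forall fun ω => by ring)
  rw [integral_add hiN hiTN, integral_add hiC hiTC, hzN, hzC, zero_add, zero_add]
  have hconv : ∀ (D : (Fin q → ℝ) → ℝ), Integrable (fun ω => D (X ω)) P →
      ∫ ω, indG G GLabel.T ω / pT * D (X ω) ∂P
        = pT⁻¹ * ∫ ω, D (X ω) * indG G GLabel.T ω ∂P := by
    intro D hD
    rw [← integral_const_mul]
    exact integral_congr_ae (Filter.Eventually.of_forall fun ω => by ring)
  rw [hconv ΔμN hDN, hconv ΔμC hDC, ← mul_sub,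
    ← integral_sub (hDN.mul_indG hG GLabel.T) (hDC.mul_indG hG GLabel.T)]
  -- identify the conditional means
  have cancel : ∀ (g : GLabel) (a b : Ω → ℝ),
      ((fun ω => a ω * e g (X ω)) =ᵐ[P] (fun ω => b ω * e g (X ω))) → a =ᵐ[P] b := by
    intro g a b h
    filter_upwards [h] with ω h
    exact mul_right_cancel₀ (ne_of_gt (lt_of_lt_of_le hε (hpos g (X ω)))) h
  have hDCeq : (fun ω => ΔμC (X ω)) =ᵐ[P] (fun ω => gC (X ω)) := by
    refine cancel GLabel.C _ _ ?_
    have e1 : (fun ω => (Y1 ω - Y0 ω) * indG G GLabel.C ω) =ᵐ[P]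
        (fun ω => (Y100 ω - Y000 ω) * indG G GLabel.C ω) := by
      filter_upwards [hconsC, hcons0] with ω h1 h0
      by_cases h : G ω = GLabel.C
      · rw [h1 h, h0]
      · unfold indG; rw [if_neg h, mul_zero, mul_zero]
    have h2 : P[(fun ω => (Y1 ω - Y0 ω) * indG G GLabel.C ω) | sigmaX X] =ᵐ[P]
        (fun ω => ΔμC (X ω) * e GLabel.C (X ω)) := hΔμC.2
    have h3 : P[(fun ω => (Y100 ω - Y000 ω) * indG G GLabel.C ω) | sigmaX X] =ᵐ[P]
        (fun ω => gC (X ω) * e GLabel.C (X ω)) := hgC.2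
    filter_upwards [h2, condExp_congr_ae (m := sigmaX X) e1, h3] with ω h2 he h3
    rw [← h2, he, h3]
  have hDNeq : (fun ω => ΔμN (X ω)) =ᵐ[P] (fun ω => fN (X ω) + gN (X ω)) := by
    refine cancel GLabel.N _ _ ?_
    have e1 : (fun ω => (Y1 ω - Y0 ω) * indG G GLabel.N ω) =ᵐ[P]
        ((fun ω => (Y101 ω - Y100 ω) * indG G GLabel.N ω) +
          (fun ω => (Y100 ω - Y000 ω) * indG G GLabel.N ω)) := by
      filter_upwards [hconsN, hcons0] with ω h1 h0
      simp only [Pi.add_apply]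
      by_cases h : G ω = GLabel.N
      · rw [h1 h, h0]; ring
      · unfold indG; rw [if_neg h]; ring
    have hadd := condExp_add (μ := P) (m := sigmaX X)
      (f := fun ω => (Y101 ω - Y100 ω) * indG G GLabel.N ω)
      (g := fun ω => (Y100 ω - Y000 ω) * indG G GLabel.N ω)
      (Integrable.mul_indG (Z := fun ω => Y101 ω - Y100 ω) (hI01.sub hI00) hG GLabel.N)
      (Integrable.mul_indG (Z := fun ω => Y100 ω - Y000 ω) (hI00.sub hI000) hG GLabel.N)
    have h2 : P[(fun ω => (Y1 ω - Y0 ω) * indG G GLabel.N ω) | sigmaX X] =ᵐ[P]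
        (fun ω => ΔμN (X ω) * e GLabel.N (X ω)) := hΔμN.2
    have h4 : P[(fun ω => (Y101 ω - Y100 ω) * indG G GLabel.N ω) | sigmaX X] =ᵐ[P]
        (fun ω => fN (X ω) * e GLabel.N (X ω)) := hfN.2
    have h5 : P[(fun ω => (Y100 ω - Y000 ω) * indG G GLabel.N ω) | sigmaX X] =ᵐ[P]
        (fun ω => gN (X ω) * e GLabel.N (X ω)) := hgN.2
    filter_upwards [h2, condExp_congr_ae (m := sigmaX X) e1, hadd, h4, h5]
      with ω h2 he h3 h4 h5
    simp only [Pi.add_apply] at h3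
    rw [add_mul, ← h2, he, h3, h4, h5]
  have hkey : ∫ ω, (ΔμN (X ω) * indG G GLabel.T ω - ΔμC (X ω) * indG G GLabel.T ω) ∂P
      = ∫ ω, (Y111 ω - Y110 ω) * indG G GLabel.T ω ∂P := by
    have h1 : (fun ω => ΔμN (X ω) * indG G GLabel.T ω - ΔμC (X ω) * indG G GLabel.T ω)
        =ᵐ[P] (fun ω => -(fT (X ω) * indG G GLabel.T ω)) := by
      filter_upwards [hDNeq, hDCeq, hA5, hA6] with ω h1 h2 h3 h4
      rw [h1, h2]
      have hfNv : fN (X ω) = -fT (X ω) := by linarith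
      rw [hfNv, h4]; ring
    have hfT2 : P[(fun ω => (Y110 ω - Y111 ω) * indG G GLabel.T ω) | sigmaX X] =ᵐ[P]
        (fun ω => fT (X ω) * e GLabel.T (X ω)) := hfT.2
    have hpgT : P[indG G GLabel.T | sigmaX X] =ᵐ[P] (fun ω => e GLabel.T (X ω)) :=
      hprop GLabel.T
    have h2 : ∫ ω, fT (X ω) * indG G GLabel.T ω ∂P
        = ∫ ω, (Y110 ω - Y111 ω) * indG G GLabel.T ω ∂P := by
      calc ∫ ω, fT (X ω) * indG G GLabel.T ω ∂P
          = ∫ ω, fT (X ω) * (P[indG G GLabel.T | sigmaX X]) ω ∂P :=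
            integral_mul_eq hX (measurable_sigmaX_comp hX hfT.1) (integrable_indG hG GLabel.T)
              (hfTint.mul_indG hG GLabel.T)
        _ = ∫ ω, fT (X ω) * e GLabel.T (X ω) ∂P :=
            integral_congr_ae (by filter_upwards [hpgT] with ω h; rw [h])
        _ = ∫ ω, (P[(fun ω => (Y110 ω - Y111 ω) * indG G GLabel.T ω) | sigmaX X]) ω ∂P :=
            (integral_congr_ae hfT2).symm
        _ = ∫ ω, (Y110 ω - Y111 ω) * indG G GLabel.T ω ∂P := integral_condExp hm
    calc ∫ ω, (ΔμN (X ω) * indG G GLabel.T ω - ΔμC (X ω) * indG G GLabel.T ω) ∂P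
        = ∫ ω, -(fT (X ω) * indG G GLabel.T ω) ∂P := integral_congr_ae h1
      _ = -∫ ω, fT (X ω) * indG G GLabel.T ω ∂P := integral_neg _
      _ = -∫ ω, (Y110 ω - Y111 ω) * indG G GLabel.T ω ∂P := by rw [h2]
      _ = ∫ ω, -((Y110 ω - Y111 ω) * indG G GLabel.T ω) ∂P := (integral_neg _).symm
      _ = ∫ ω, (Y111 ω - Y110 ω) * indG G GLabel.T ω ∂P :=
            integral_congr_ae (Filter.Eventually.of_forall fun ω => by ring)
  rw [hkey, div_eq_inv_mul]
end

section
/- (Population version of Theorem 1, correctly specified propensity scores.) Let Δμ̂_N, Δμ̂_C : ℝ^q → ℝ be arbitrary bounded measurable functions (possibly misspecified outcome regression models), and let e_T, e_N, e_C be the true propensity scores. Under consistency of the potential outcomes and Assumptions (A5) and (A6), the doubly-robust functional E[ (e_T(X)/p_T)·(1{G=N}/e_N(X))·(ΔY − Δμ̂_N(X)) + (1{G=T}/p_T)·Δμ̂_N(X) ] − E[ (e_T(X)/p_T)·(1{G=C}/e_C(X))·(ΔY − Δμ̂_C(X)) + (1{G=T}/p_T)·Δμ̂_C(X) ] equals δ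 := E[(Y₁^{(1,1)} − Y₁^{(1,0)})·1{G=T}]/p_T. -/
open MeasureTheory ProbabilityTheory Filter Topology

lemma key_int_s8 {Ω : Type} [MeasurableSpace Ω] (P : Measure Ω) [IsProbabilityMeasure P]
    {q : ℕ} {X : Ω → (Fin q → ℝ)} (hX : Measurable X)
    (φ : (Fin q → ℝ) → ℝ) (hφ : Measurable φ) (M : ℝ) (hM : ∀ x, |φ x| ≤ M)
    (W : Ω → ℝ) (hW : Integrable W P) (F : Ω → ℝ)
    (hF : P[W | sigmaX X] =ᵐ[P] F) :
    ∫ ω, φ (X ω) * W ω ∂P = ∫ ω, φ (X ω) * F ω ∂P := by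
  have hm : sigmaX X ≤ ‹MeasurableSpace Ω› := hX.comap_le
  haveI : SigmaFinite (P.trim hm) := inferInstance
  have hXm : Measurable[sigmaX X] X := Measurable.of_comap_le le_rfl
  have hφX : StronglyMeasurable[sigmaX X] (fun ω => φ (X ω)) :=
    (hφ.comp hXm).stronglyMeasurable
  have hbd : ∃ C, ∀ ω, ‖φ (X ω)‖ ≤ C := ⟨M, fun ω => by simpa using hM (X ω)⟩
  have hint : Integrable (fun ω => φ (X ω) * W ω) P :=
    hW.bdd_mul (hφ.comp hX).aestronglyMeasurable (c := M) (Eventually.of_forall fun ω => by simpa using hM (X ω))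
  have hmul : P[(fun ω => φ (X ω) * W ω) | sigmaX X]
      =ᵐ[P] fun ω => φ (X ω) * (P[W | sigmaX X]) ω :=
    condExp_mul_of_stronglyMeasurable_left hφX hint hW
  calc ∫ ω, φ (X ω) * W ω ∂P
      = ∫ ω, (P[(fun ω => φ (X ω) * W ω) | sigmaX X]) ω ∂P := (integral_condExp hm).symm
    _ = ∫ ω, φ (X ω) * (P[W | sigmaX X]) ω ∂P := integral_congr_ae hmul
    _ = ∫ ω, φ (X ω) * F ω ∂P := by
        refine integral_congr_ae ?_
        filter_upwards [hF] with ω h using by rw [h]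

theorem stmt_8
    {Ω : Type} [MeasurableSpace Ω] (P : Measure Ω) [IsProbabilityMeasure P]
    {q : ℕ} (X : Ω → (Fin q → ℝ)) (hX : Measurable X)
    (G : Ω → GLabel) (hG : Measurable G)
    (Y0 Y1 : Ω → ℝ) (hY0 : Integrable Y0 P) (hY1 : Integrable Y1 P)
    (e : GLabel → (Fin q → ℝ) → ℝ) (he : ∀ g, Measurable (e g))
    (he1 : ∀ g x, e g x ≤ 1)
    (hprop : ∀ g : GLabel,
      P[(fun ω => indG G g ω) | sigmaX X] =ᵐ[P] (fun ω => e g (X ω)))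
    (ε : ℝ) (hε : 0 < ε) (hpos : ∀ g x, ε ≤ e g x)
    (hpT : 0 < (P {ω | G ω = GLabel.T}).toReal)
    (Y110 Y111 Y101 Y100 Y000 : Ω → ℝ)
    (hI10 : Integrable Y110 P) (hI11 : Integrable Y111 P)
    (hI01 : Integrable Y101 P) (hI00 : Integrable Y100 P) (hI000 : Integrable Y000 P)
    (hconsT : ∀ᵐ ω ∂P, G ω = GLabel.T → Y1 ω = Y110 ω)
    (hconsN : ∀ᵐ ω ∂P, G ω = GLabel.N → Y1 ω = Y101 ω)
    (hconsC : ∀ᵐ ω ∂P, G ω = GLabel.C → Y1 ω = Y100 ω)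
    (hcons0 : Y0 =ᵐ[P] Y000)
    (fT fN : (Fin q → ℝ) → ℝ)
    (hfT : IsCondVersion P X G e GLabel.T (fun ω => Y110 ω - Y111 ω) fT)
    (hfN : IsCondVersion P X G e GLabel.N (fun ω => Y101 ω - Y100 ω) fN)
    (hA5 : ∀ᵐ ω ∂P, fT (X ω) + fN (X ω) = 0)
    (gN gC : (Fin q → ℝ) → ℝ)
    (hgN : IsCondVersion P X G e GLabel.N (fun ω => Y100 ω - Y000 ω) gN)
    (hgC : IsCondVersion P X G e GLabel.C (fun ω => Y100 ω - Y000 ω) gC)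
    (hA6 : ∀ᵐ ω ∂P, gN (X ω) = gC (X ω))
    (μhatN μhatC : (Fin q → ℝ) → ℝ)
    (hμhatN : Measurable μhatN) (hμhatC : Measurable μhatC)
    (MN : ℝ) (hMN : ∀ x, |μhatN x| ≤ MN) (MC : ℝ) (hMC : ∀ x, |μhatC x| ≤ MC)
    :
    (∫ ω, (e GLabel.T (X ω) / (P {ω | G ω = GLabel.T}).toReal) * (indG G GLabel.N ω / e GLabel.N (X ω)) *
          ((Y1 ω - Y0 ω) - μhatN (X ω))
        + (indG G GLabel.T ω / (P {ω | G ω = GLabel.T}).toReal) * μhatN (X ω) ∂P)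
      - (∫ ω, (e GLabel.T (X ω) / (P {ω | G ω = GLabel.T}).toReal) * (indG G GLabel.C ω / e GLabel.C (X ω)) *
          ((Y1 ω - Y0 ω) - μhatC (X ω))
        + (indG G GLabel.T ω / (P {ω | G ω = GLabel.T}).toReal) * μhatC (X ω) ∂P)
      = (∫ ω, (Y111 ω - Y110 ω) * indG G GLabel.T ω ∂P) / (P {ω | G ω = GLabel.T}).toReal := by
  classical
  set pT := (P {ω | G ω = GLabel.T}).toReal with hpTdef
  have hpT' : pT ≠ 0 := ne_of_gt hpT
  have hepos : ∀ g x, 0 < e g x := fun g x => lt_of_lt_of_le hε (hpos g x)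
  have hene : ∀ g x, e g x ≠ 0 := fun g x => ne_of_gt (hepos g x)
  -- indicator facts
  have hIndMeas : ∀ g, Measurable (indG G g) := by
    intro g
    unfold indG
    have hs : MeasurableSet {ω | G ω = g} :=
      hG (show MeasurableSet ({g} : Set GLabel) from MeasurableSpace.measurableSet_top)
    exact Measurable.ite hs measurable_const measurable_const
  have hIndBd : ∀ g ω, |indG G g ω| ≤ 1 := by
    intro g ω; unfold indG; split <;> simp
  have hIndInt : ∀ g, Integrable (indG G g) P := by
    intro g
    have hone : Integrable (fun _ : Ω => (1 : ℝ)) P := integrable_const 1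
    have h := hone.bdd_mul (hIndMeas g).aestronglyMeasurable
      (c := 1) (Eventually.of_forall fun ω => by simpa using hIndBd g ω)
    simpa using h
  have hZmulInd : ∀ (Z : Ω → ℝ), Integrable Z P → ∀ g,
      Integrable (fun ω => Z ω * indG G g ω) P := by
    intro Z hZ g
    have h := hZ.bdd_mul (hIndMeas g).aestronglyMeasurable
      (c := 1) (Eventually.of_forall fun ω => by simpa using hIndBd g ω)
    simpa [mul_comm] using h
  -- bounded-times-integrable helper
  have bddMulInt : ∀ (φ : (Fin q → ℝ) → ℝ), Measurable φ → ∀ M : ℝ, (∀ x, |φ x| ≤ M) →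
      ∀ (W : Ω → ℝ), Integrable W P → Integrable (fun ω => φ (X ω) * W ω) P := by
    intro φ hφ M hM W hW
    exact hW.bdd_mul (hφ.comp hX).aestronglyMeasurable (c := M) (Eventually.of_forall fun ω => by simpa using hM (X ω))
  -- the weight functions
  have hφmeas : ∀ g, Measurable (fun x => e GLabel.T x / (pT * e g x)) := fun g =>
    (he GLabel.T).div (measurable_const.mul (he g))
  have hφbd : ∀ g x, |e GLabel.T x / (pT * e g x)| ≤ 1 / (pT * ε) := by
    intro g x
    rw [abs_of_nonneg (div_nonneg (hepos GLabel.T x).le (mul_pos hpT (hepos g x)).le)]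
    exact div_le_div₀ zero_le_one (he1 GLabel.T x) (mul_pos hpT hε)
      (mul_le_mul_of_nonneg_left (hpos g x) hpT.le)
  have hψNbd : ∀ x, |e GLabel.T x / (pT * e GLabel.N x) * μhatN x| ≤ 1 / (pT * ε) * MN := by
    intro x
    rw [abs_mul]
    exact mul_le_mul (hφbd GLabel.N x) (hMN x) (abs_nonneg _)
      (by positivity)
  have hψCbd : ∀ x, |e GLabel.T x / (pT * e GLabel.C x) * μhatC x| ≤ 1 / (pT * ε) * MC := by
    intro x
    rw [abs_mul]
    exact mul_le_mul (hφbd GLabel.C x) (hMC x) (abs_nonneg _) (by positivity)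
  -- integrable pieces
  have iWfN : Integrable (fun ω => (Y101 ω - Y100 ω) * indG G GLabel.N ω) P :=
    hZmulInd _ (hI01.sub hI00) _
  have iWgN : Integrable (fun ω => (Y100 ω - Y000 ω) * indG G GLabel.N ω) P :=
    hZmulInd _ (hI00.sub hI000) _
  have iWgC : Integrable (fun ω => (Y100 ω - Y000 ω) * indG G GLabel.C ω) P :=
    hZmulInd _ (hI00.sub hI000) _
  have ih1 : Integrable (fun ω => e GLabel.T (X ω) / (pT * e GLabel.N (X ω)) *
      ((Y101 ω - Y100 ω) * indG G GLabel.N ω)) P :=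
    bddMulInt _ (hφmeas _) _ (hφbd GLabel.N) _ iWfN
  have ih2 : Integrable (fun ω => e GLabel.T (X ω) / (pT * e GLabel.N (X ω)) *
      ((Y100 ω - Y000 ω) * indG G GLabel.N ω)) P :=
    bddMulInt _ (hφmeas _) _ (hφbd GLabel.N) _ iWgN
  have ih3 : Integrable (fun ω => (e GLabel.T (X ω) / (pT * e GLabel.N (X ω)) * μhatN (X ω)) *
      indG G GLabel.N ω) P :=
    bddMulInt _ ((hφmeas _).mul hμhatN) _ hψNbd _ (hIndInt _)
  have hρNbd : ∀ x, |μhatN x / pT| ≤ MN / pT := by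
    intro x
    rw [abs_div, abs_of_nonneg hpT.le]
    gcongr
    exact hMN x
  have hρCbd : ∀ x, |μhatC x / pT| ≤ MC / pT := by
    intro x
    rw [abs_div, abs_of_nonneg hpT.le]
    gcongr
    exact hMC x
  have ih4 : Integrable (fun ω => (μhatN (X ω) / pT) * indG G GLabel.T ω) P :=
    bddMulInt _ (hμhatN.div measurable_const) _ hρNbd _ (hIndInt _)
  have ic1 : Integrable (fun ω => e GLabel.T (X ω) / (pT * e GLabel.C (X ω)) *
      ((Y100 ω - Y000 ω) * indG G GLabel.C ω)) P :=
    bddMulInt _ (hφmeas _) _ (hφbd GLabel.C) _ iWgC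
  have ic3 : Integrable (fun ω => (e GLabel.T (X ω) / (pT * e GLabel.C (X ω)) * μhatC (X ω)) *
      indG G GLabel.C ω) P :=
    bddMulInt _ ((hφmeas _).mul hμhatC) _ hψCbd _ (hIndInt _)
  have ic4 : Integrable (fun ω => (μhatC (X ω) / pT) * indG G GLabel.T ω) P :=
    bddMulInt _ (hμhatC.div measurable_const) _ hρCbd _ (hIndInt _)
  -- splitting integrals
  have split4 : ∀ (f1 f2 f3 f4 : Ω → ℝ), Integrable f1 P → Integrable f2 P →
      Integrable f3 P → Integrable f4 P →
      ∫ ω, (f1 ω + f2 ω - f3 ω + f4 ω) ∂P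
        = (∫ ω, f1 ω ∂P) + (∫ ω, f2 ω ∂P) - (∫ ω, f3 ω ∂P) + (∫ ω, f4 ω ∂P) := by
    intro f1 f2 f3 f4 i1 i2 i3 i4
    have h1 := integral_add ((i1.add i2).sub i3) i4
    simp only [Pi.add_apply, Pi.sub_apply] at h1
    have h2 := integral_sub (i1.add i2) i3
    simp only [Pi.add_apply, Pi.sub_apply] at h2
    have h3 := integral_add i1 i2
    rw [h1, h2, h3]
  have split3 : ∀ (f1 f3 f4 : Ω → ℝ), Integrable f1 P →
      Integrable f3 P → Integrable f4 P →
      ∫ ω, (f1 ω - f3 ω + f4 ω) ∂P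
        = (∫ ω, f1 ω ∂P) - (∫ ω, f3 ω ∂P) + (∫ ω, f4 ω ∂P) := by
    intro f1 f3 f4 i1 i3 i4
    have h1 := integral_add (i1.sub i3) i4
    simp only [Pi.add_apply, Pi.sub_apply] at h1
    have h2 := integral_sub i1 i3
    rw [h1, h2]
  -- a.e. rewriting of the N-group integrand
  have haeN : (fun ω => (e GLabel.T (X ω) / pT) * (indG G GLabel.N ω / e GLabel.N (X ω)) *
          ((Y1 ω - Y0 ω) - μhatN (X ω))
        + (indG G GLabel.T ω / pT) * μhatN (X ω)) =ᵐ[P]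
      (fun ω => e GLabel.T (X ω) / (pT * e GLabel.N (X ω)) * ((Y101 ω - Y100 ω) * indG G GLabel.N ω)
        + e GLabel.T (X ω) / (pT * e GLabel.N (X ω)) * ((Y100 ω - Y000 ω) * indG G GLabel.N ω)
        - (e GLabel.T (X ω) / (pT * e GLabel.N (X ω)) * μhatN (X ω)) * indG G GLabel.N ω
        + (μhatN (X ω) / pT) * indG G GLabel.T ω) := by
    filter_upwards [hconsN, hcons0] with ω hN h0
    by_cases hg : G ω = GLabel.N
    · have hY1 : Y1 ω = Y101 ω := hN hg
      simp only [indG, hg, if_pos, reduceCtorEq, if_false, hY1, h0]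
      have hne : e GLabel.N (X ω) ≠ 0 := hene _ _
      field_simp
      ring
    · simp only [indG, if_neg hg]
      ring
  have haeC : (fun ω => (e GLabel.T (X ω) / pT) * (indG G GLabel.C ω / e GLabel.C (X ω)) *
          ((Y1 ω - Y0 ω) - μhatC (X ω))
        + (indG G GLabel.T ω / pT) * μhatC (X ω)) =ᵐ[P]
      (fun ω => e GLabel.T (X ω) / (pT * e GLabel.C (X ω)) * ((Y100 ω - Y000 ω) * indG G GLabel.C ω)
        - (e GLabel.T (X ω) / (pT * e GLabel.C (X ω)) * μhatC (X ω)) * indG G GLabel.C ω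
        + (μhatC (X ω) / pT) * indG G GLabel.T ω) := by
    filter_upwards [hconsC, hcons0] with ω hC h0
    by_cases hg : G ω = GLabel.C
    · have hY1 : Y1 ω = Y100 ω := hC hg
      simp only [indG, hg, if_pos, reduceCtorEq, if_false, hY1, h0]
      have hne : e GLabel.C (X ω) ≠ 0 := hene _ _
      field_simp
    · simp only [indG, if_neg hg]
      ring
  -- key identities
  have k1 : ∫ ω, e GLabel.T (X ω) / (pT * e GLabel.N (X ω)) *
        ((Y101 ω - Y100 ω) * indG G GLabel.N ω) ∂P
      = ∫ ω, e GLabel.T (X ω) / (pT * e GLabel.N (X ω)) * (fN (X ω) * e GLabel.N (X ω)) ∂P :=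
    key_int_s8 P hX _ (hφmeas _) _ (hφbd GLabel.N) _ iWfN _ hfN.2
  have k2 : ∫ ω, e GLabel.T (X ω) / (pT * e GLabel.N (X ω)) *
        ((Y100 ω - Y000 ω) * indG G GLabel.N ω) ∂P
      = ∫ ω, e GLabel.T (X ω) / (pT * e GLabel.N (X ω)) * (gN (X ω) * e GLabel.N (X ω)) ∂P :=
    key_int_s8 P hX _ (hφmeas _) _ (hφbd GLabel.N) _ iWgN _ hgN.2
  have k3 : ∫ ω, (e GLabel.T (X ω) / (pT * e GLabel.N (X ω)) * μhatN (X ω)) *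
        indG G GLabel.N ω ∂P
      = ∫ ω, (e GLabel.T (X ω) / (pT * e GLabel.N (X ω)) * μhatN (X ω)) * e GLabel.N (X ω) ∂P :=
    key_int_s8 P hX _ ((hφmeas _).mul hμhatN) _ hψNbd _ (hIndInt _) _ (hprop GLabel.N)
  have k4 : ∫ ω, (μhatN (X ω) / pT) * indG G GLabel.T ω ∂P
      = ∫ ω, (μhatN (X ω) / pT) * e GLabel.T (X ω) ∂P :=
    key_int_s8 P hX _ (hμhatN.div measurable_const) _ hρNbd _ (hIndInt _) _ (hprop GLabel.T)
  have kc1 : ∫ ω, e GLabel.T (X ω) / (pT * e GLabel.C (X ω)) *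
        ((Y100 ω - Y000 ω) * indG G GLabel.C ω) ∂P
      = ∫ ω, e GLabel.T (X ω) / (pT * e GLabel.C (X ω)) * (gC (X ω) * e GLabel.C (X ω)) ∂P :=
    key_int_s8 P hX _ (hφmeas _) _ (hφbd GLabel.C) _ iWgC _ hgC.2
  have kc3 : ∫ ω, (e GLabel.T (X ω) / (pT * e GLabel.C (X ω)) * μhatC (X ω)) *
        indG G GLabel.C ω ∂P
      = ∫ ω, (e GLabel.T (X ω) / (pT * e GLabel.C (X ω)) * μhatC (X ω)) * e GLabel.C (X ω) ∂P :=
    key_int_s8 P hX _ ((hφmeas _).mul hμhatC) _ hψCbd _ (hIndInt _) _ (hprop GLabel.C)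
  have kc4 : ∫ ω, (μhatC (X ω) / pT) * indG G GLabel.T ω ∂P
      = ∫ ω, (μhatC (X ω) / pT) * e GLabel.T (X ω) ∂P :=
    key_int_s8 P hX _ (hμhatC.div measurable_const) _ hρCbd _ (hIndInt _) _ (hprop GLabel.T)
  -- the μhat terms cancel
  have e34 : ∫ ω, (e GLabel.T (X ω) / (pT * e GLabel.N (X ω)) * μhatN (X ω)) * e GLabel.N (X ω) ∂P
      = ∫ ω, (μhatN (X ω) / pT) * e GLabel.T (X ω) ∂P := by
    refine integral_congr_ae (Eventually.of_forall fun ω => ?_)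
    have hne : e GLabel.N (X ω) ≠ 0 := hene _ _
    field_simp
  have ec34 : ∫ ω, (e GLabel.T (X ω) / (pT * e GLabel.C (X ω)) * μhatC (X ω)) * e GLabel.C (X ω) ∂P
      = ∫ ω, (μhatC (X ω) / pT) * e GLabel.T (X ω) ∂P := by
    refine integral_congr_ae (Eventually.of_forall fun ω => ?_)
    have hne : e GLabel.C (X ω) ≠ 0 := hene _ _
    field_simp
  -- value of the N-group integral
  have JN : (∫ ω, (e GLabel.T (X ω) / pT) * (indG G GLabel.N ω / e GLabel.N (X ω)) *
          ((Y1 ω - Y0 ω) - μhatN (X ω))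
        + (indG G GLabel.T ω / pT) * μhatN (X ω) ∂P)
      = (∫ ω, e GLabel.T (X ω) / (pT * e GLabel.N (X ω)) * (fN (X ω) * e GLabel.N (X ω)) ∂P)
        + (∫ ω, e GLabel.T (X ω) / (pT * e GLabel.N (X ω)) * (gN (X ω) * e GLabel.N (X ω)) ∂P) := by
    rw [integral_congr_ae haeN, split4 _ _ _ _ ih1 ih2 ih3 ih4, k1, k2, k3, k4, e34]
    ring
  have JC : (∫ ω, (e GLabel.T (X ω) / pT) * (indG G GLabel.C ω / e GLabel.C (X ω)) *
          ((Y1 ω - Y0 ω) - μhatC (X ω))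
        + (indG G GLabel.T ω / pT) * μhatC (X ω) ∂P)
      = (∫ ω, e GLabel.T (X ω) / (pT * e GLabel.C (X ω)) * (gC (X ω) * e GLabel.C (X ω)) ∂P) := by
    rw [integral_congr_ae haeC, split3 _ _ _ ic1 ic3 ic4, kc1, kc3, kc4, ec34]
    ring
  -- the gN and gC integrals agree (A6)
  have hgNint : Integrable (fun ω => gN (X ω) * e GLabel.N (X ω)) P :=
    integrable_condExp.congr hgN.2
  have hgCint : Integrable (fun ω => gC (X ω) * e GLabel.C (X ω)) P :=
    integrable_condExp.congr hgC.2
  have eG : (∫ ω, e GLabel.T (X ω) / (pT * e GLabel.N (X ω)) * (gN (X ω) * e GLabel.N (X ω)) ∂P)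
      = (∫ ω, e GLabel.T (X ω) / (pT * e GLabel.C (X ω)) * (gC (X ω) * e GLabel.C (X ω)) ∂P) := by
    refine integral_congr_ae ?_
    filter_upwards [hA6] with ω h6
    have hnN : e GLabel.N (X ω) ≠ 0 := hene _ _
    have hnC : e GLabel.C (X ω) ≠ 0 := hene _ _
    rw [h6]
    field_simp
  -- the fN integral equals the target (A5)
  have hfNint : Integrable (fun ω => fN (X ω) * e GLabel.N (X ω)) P :=
    integrable_condExp.congr hfN.2
  have kT : ∫ ω, (Y110 ω - Y111 ω) * indG G GLabel.T ω ∂P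
      = ∫ ω, fT (X ω) * e GLabel.T (X ω) ∂P := by
    have h := key_int_s8 P hX (fun _ => (1 : ℝ)) measurable_const 1 (by simp)
      (fun ω => (Y110 ω - Y111 ω) * indG G GLabel.T ω) (hZmulInd _ (hI10.sub hI11) _)
      (fun ω => fT (X ω) * e GLabel.T (X ω)) hfT.2
    simpa using h
  have eA5 : (∫ ω, e GLabel.T (X ω) / (pT * e GLabel.N (X ω)) * (fN (X ω) * e GLabel.N (X ω)) ∂P)
      = (∫ ω, -((Y110 ω - Y111 ω) * indG G GLabel.T ω) ∂P) / pT := by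
    rw [integral_neg, kT, ← integral_neg, ← integral_div]
    refine integral_congr_ae ?_
    filter_upwards [hA5] with ω h5
    have hnN : e GLabel.N (X ω) ≠ 0 := hene _ _
    have : fN (X ω) = -fT (X ω) := by linarith
    rw [this]
    field_simp
  rw [JN, JC, eG]
  have : (∫ ω, -((Y110 ω - Y111 ω) * indG G GLabel.T ω) ∂P)
      = ∫ ω, (Y111 ω - Y110 ω) * indG G GLabel.T ω ∂P := by
    refine integral_congr_ae (Eventually.of_forall fun ω => ?_)
    ring
  rw [← this, ← eA5]
  ring
end

section
/- (ATT identification under conditional counterfactual parallel trends with the treated.) Under consistency of the potential outcomes and Assumption (A4), if Δμ_C is a version of E[ΔY ∣ G=C, X], then E[ (1{G=T}/p_T) · (ΔY − Δμ_C(X)) ] = ATT := E[(Y₁^{(1,0)} − Y₁^{(0,0)})·1{G=T}]/p_T. Moreover, for any bounded measurable Δμ̂_C : ℝ^q → ℝ, E[ ( 1{G=T}/p_T − e_T(X)·1{G=C}/(p_T·e_C(X)) ) · (ΔY − Δμ̂_C(X)) ] = ATT. -/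
open MeasureTheory ProbabilityTheory Filter Topology

theorem stmt_9
    {Ω : Type} [MeasurableSpace Ω] (P : Measure Ω) [IsProbabilityMeasure P]
    {q : ℕ} (X : Ω → (Fin q → ℝ)) (hX : Measurable X)
    (G : Ω → GLabel) (hG : Measurable G)
    (Y0 Y1 : Ω → ℝ) (hY0 : Integrable Y0 P) (hY1 : Integrable Y1 P)
    (e : GLabel → (Fin q → ℝ) → ℝ) (he : ∀ g, Measurable (e g))
    (he1 : ∀ g x, e g x ≤ 1)
    (hprop : ∀ g : GLabel,
      P[(fun ω => indG G g ω) | sigmaX X] =ᵐ[P] (fun ω => e g (X ω)))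
    (ε : ℝ) (hε : 0 < ε) (hpos : ∀ g x, ε ≤ e g x)
    (hpT : 0 < (P {ω | G ω = GLabel.T}).toReal)
    (Y110 Y111 Y101 Y100 Y000 : Ω → ℝ)
    (hI10 : Integrable Y110 P) (hI11 : Integrable Y111 P)
    (hI01 : Integrable Y101 P) (hI00 : Integrable Y100 P) (hI000 : Integrable Y000 P)
    (hconsT : ∀ᵐ ω ∂P, G ω = GLabel.T → Y1 ω = Y110 ω)
    (hconsN : ∀ᵐ ω ∂P, G ω = GLabel.N → Y1 ω = Y101 ω)
    (hconsC : ∀ᵐ ω ∂P, G ω = GLabel.C → Y1 ω = Y100 ω)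
    (hcons0 : Y0 =ᵐ[P] Y000)
    (gT gC4 : (Fin q → ℝ) → ℝ)
    (hgT : IsCondVersion P X G e GLabel.T (fun ω => Y100 ω - Y000 ω) gT)
    (hgC4 : IsCondVersion P X G e GLabel.C (fun ω => Y100 ω - Y000 ω) gC4)
    (hA4 : ∀ᵐ ω ∂P, gT (X ω) = gC4 (X ω))
    (ΔμC : (Fin q → ℝ) → ℝ)
    (hΔμC : IsCondVersion P X G e GLabel.C (fun ω => Y1 ω - Y0 ω) ΔμC)
    (μhatC : (Fin q → ℝ) → ℝ) (hμhatC : Measurable μhatC)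
    (MC : ℝ) (hMC : ∀ x, |μhatC x| ≤ MC)
    :
    (∫ ω, (indG G GLabel.T ω / (P {ω | G ω = GLabel.T}).toReal) * ((Y1 ω - Y0 ω) - ΔμC (X ω)) ∂P
        = (∫ ω, (Y110 ω - Y100 ω) * indG G GLabel.T ω ∂P) / (P {ω | G ω = GLabel.T}).toReal) ∧
      (∫ ω, (indG G GLabel.T ω / (P {ω | G ω = GLabel.T}).toReal
            - e GLabel.T (X ω) * indG G GLabel.C ω / ((P {ω | G ω = GLabel.T}).toReal * e GLabel.C (X ω))) *
          ((Y1 ω - Y0 ω) - μhatC (X ω)) ∂P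
        = (∫ ω, (Y110 ω - Y100 ω) * indG G GLabel.T ω ∂P) / (P {ω | G ω = GLabel.T}).toReal) := by
  have hm : sigmaX X ≤ ‹MeasurableSpace Ω› := hX.comap_le
  set pT := (P {ω | G ω = GLabel.T}).toReal with hpTdef
  -- basic measurability
  have hXm : Measurable[sigmaX X] X := fun s hs => ⟨s, hs, rfl⟩
  have hsm : ∀ {f : (Fin q → ℝ) → ℝ}, Measurable f →
      StronglyMeasurable[sigmaX X] (fun ω => f (X ω)) := fun hf =>
    (hf.comp hXm).stronglyMeasurable
  have hIndMeas : ∀ g : GLabel, Measurable (indG G g) := by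
    intro g
    exact (measurable_from_top (f := fun l : GLabel => if l = g then (1:ℝ) else 0)).comp hG
  have hIndBd : ∀ g ω, ‖indG G g ω‖ ≤ 1 := by
    intro g ω
    unfold indG; split <;> simp
  have hbddInt : ∀ (f : Ω → ℝ), AEStronglyMeasurable f P → (∃ C, ∀ ω, ‖f ω‖ ≤ C) →
      Integrable f P := by
    rintro f hf ⟨C, hC⟩
    exact Integrable.mono' (integrable_const C) hf (Filter.Eventually.of_forall hC)
  have heC0 : ∀ x, e GLabel.C x ≠ 0 := fun x => (lt_of_lt_of_le hε (hpos _ _)).ne'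
  have heT0 : ∀ x, e GLabel.T x ≠ 0 := fun x => (lt_of_lt_of_le hε (hpos _ _)).ne'
  -- pull-out lemma
  have pull : ∀ (f Z φ : Ω → ℝ), StronglyMeasurable[sigmaX X] f → Integrable Z P →
      Integrable (fun ω => f ω * Z ω) P → P[Z|sigmaX X] =ᵐ[P] φ →
      ∫ ω, f ω * Z ω ∂P = ∫ ω, f ω * φ ω ∂P := by
    intro f Z φ hf hZ hfZ hφ
    have h1 : P[(fun ω => f ω * Z ω)|sigmaX X] =ᵐ[P] fun ω => f ω * φ ω := by
      have h2 := condExp_mul_of_stronglyMeasurable_left hf hfZ hZ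
      filter_upwards [h2, hφ] with ω h2 h3
      simp only [Pi.mul_apply, h3] at h2
      exact h2
    calc ∫ ω, f ω * Z ω ∂P = ∫ ω, (P[(fun ω => f ω * Z ω)|sigmaX X]) ω ∂P :=
          (integral_condExp hm).symm
      _ = ∫ ω, f ω * φ ω ∂P := integral_congr_ae h1
  -- integrability of various products
  have hΔY : Integrable (fun ω => Y1 ω - Y0 ω) P := hY1.sub hY0
  have hΔ00 : Integrable (fun ω => Y100 ω - Y000 ω) P := hI00.sub hI000
  have hmulInd : ∀ (Z : Ω → ℝ), Integrable Z P → ∀ g,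
      Integrable (fun ω => Z ω * indG G g ω) P := by
    intro Z hZ g
    have := hZ.bdd_mul (hIndMeas g).aestronglyMeasurable (Filter.Eventually.of_forall (hIndBd g))
    exact this.congr (Filter.Eventually.of_forall fun ω => mul_comm _ _)
  -- key a.e. equalities
  have hZCeq : (fun ω => (Y1 ω - Y0 ω) * indG G GLabel.C ω)
      =ᵐ[P] (fun ω => (Y100 ω - Y000 ω) * indG G GLabel.C ω) := by
    filter_upwards [hconsC, hcons0] with ω h1 h2
    by_cases h : G ω = GLabel.C
    · simp [indG, h, h1 h, h2]
    · simp [indG, h]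
  have hL1 : (fun ω => ΔμC (X ω)) =ᵐ[P] (fun ω => gC4 (X ω)) := by
    have hce : (fun ω => ΔμC (X ω) * e GLabel.C (X ω))
        =ᵐ[P] (fun ω => gC4 (X ω) * e GLabel.C (X ω)) :=
      hΔμC.2.symm.trans ((condExp_congr_ae hZCeq).trans hgC4.2)
    filter_upwards [hce] with ω h
    exact mul_right_cancel₀ (heC0 (X ω)) h
  have hL2 : (fun ω => ΔμC (X ω)) =ᵐ[P] (fun ω => gT (X ω)) :=
    hL1.trans (hA4.mono fun ω h => h.symm)
  -- integrability of gT ∘ X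
  have hgTe : Integrable (fun ω => gT (X ω) * e GLabel.T (X ω)) P :=
    integrable_condExp.congr hgT.2
  have hgTi : Integrable (fun ω => gT (X ω)) P := by
    have hinvm : AEStronglyMeasurable (fun ω => (e GLabel.T (X ω))⁻¹) P :=
      (((he GLabel.T).comp hX).inv).aestronglyMeasurable
    have hinvbd : ∀ ω : Ω, ‖(e GLabel.T (X ω))⁻¹‖ ≤ ε⁻¹ := by
      intro ω
      rw [Real.norm_eq_abs, abs_inv, abs_of_pos (lt_of_lt_of_le hε (hpos _ _))]
      exact inv_anti₀ hε (hpos _ _)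
    have h := hgTe.bdd_mul hinvm (Filter.Eventually.of_forall hinvbd)
    refine h.congr (Filter.Eventually.of_forall fun ω => ?_)
    show (e GLabel.T (X ω))⁻¹ * (gT (X ω) * e GLabel.T (X ω)) = gT (X ω)
    rw [mul_comm, mul_assoc, mul_inv_cancel₀ (heT0 (X ω)), mul_one]
  -- A : ∫ ΔY * indT = ∫ (Y110 - Y000) * indT
  have hAeq : (fun ω => (Y1 ω - Y0 ω) * indG G GLabel.T ω)
      =ᵐ[P] (fun ω => (Y110 ω - Y000 ω) * indG G GLabel.T ω) := by
    filter_upwards [hconsT, hcons0] with ω h1 h2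
    by_cases h : G ω = GLabel.T
    · simp [indG, h, h1 h, h2]
    · simp [indG, h]
  have hA : ∫ ω, (Y1 ω - Y0 ω) * indG G GLabel.T ω ∂P
      = ∫ ω, (Y110 ω - Y000 ω) * indG G GLabel.T ω ∂P := integral_congr_ae hAeq
  have hIndInt : ∀ g, Integrable (indG G g) P :=
    fun g => hbddInt _ (hIndMeas g).aestronglyMeasurable ⟨1, hIndBd g⟩
  -- B : ∫ gT(X) * indT = ∫ (Y100 - Y000) * indT
  have hB : ∫ ω, gT (X ω) * indG G GLabel.T ω ∂P
      = ∫ ω, (Y100 ω - Y000 ω) * indG G GLabel.T ω ∂P := by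
    have h1 : ∫ ω, gT (X ω) * indG G GLabel.T ω ∂P
        = ∫ ω, gT (X ω) * e GLabel.T (X ω) ∂P :=
      pull (fun ω => gT (X ω)) (indG G GLabel.T) (fun ω => e GLabel.T (X ω))
        (hsm hgT.1) (hIndInt GLabel.T)
        (hmulInd (fun ω => gT (X ω)) hgTi GLabel.T) (hprop GLabel.T)
    rw [h1, ← integral_condExp hm (f := fun ω => (Y100 ω - Y000 ω) * indG G GLabel.T ω)]
    exact (integral_congr_ae hgT.2).symm
  -- numerator identity 1
  have hsub : ∫ ω, (Y110 ω - Y000 ω) * indG G GLabel.T ω ∂P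
      - ∫ ω, (Y100 ω - Y000 ω) * indG G GLabel.T ω ∂P
      = ∫ ω, (Y110 ω - Y100 ω) * indG G GLabel.T ω ∂P := by
    rw [← integral_sub (hmulInd (fun ω => Y110 ω - Y000 ω) (hI10.sub hI000) GLabel.T)
      (hmulInd (fun ω => Y100 ω - Y000 ω) (hI00.sub hI000) GLabel.T)]
    exact integral_congr_ae (Filter.Eventually.of_forall fun ω => by ring)
  have key1 : ∫ ω, indG G GLabel.T ω * ((Y1 ω - Y0 ω) - ΔμC (X ω)) ∂P
      = ∫ ω, (Y110 ω - Y100 ω) * indG G GLabel.T ω ∂P := by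
    have h1 : (fun ω => indG G GLabel.T ω * ((Y1 ω - Y0 ω) - ΔμC (X ω)))
        =ᵐ[P] (fun ω => (Y1 ω - Y0 ω) * indG G GLabel.T ω - gT (X ω) * indG G GLabel.T ω) := by
      filter_upwards [hL2] with ω h
      rw [h]; ring
    rw [integral_congr_ae h1,
      integral_sub (hmulInd _ hΔY _) (hmulInd _ hgTi _), hA, hB, hsub]
  -- numerator identity 2
  have hTC : ∀ x, G x ≠ GLabel.T ∨ G x ≠ GLabel.C := by
    intro x; by_cases h : G x = GLabel.T
    · right; rw [h]; intro hc; cases hc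
    · left; exact h
  have key2 : ∫ ω, (indG G GLabel.T ω
        - (e GLabel.T (X ω) / e GLabel.C (X ω)) * indG G GLabel.C ω)
        * ((Y1 ω - Y0 ω) - μhatC (X ω)) ∂P
      = ∫ ω, (Y110 ω - Y100 ω) * indG G GLabel.T ω ∂P := by
    -- define the four pieces
    have hhm : StronglyMeasurable[sigmaX X]
        (fun ω => e GLabel.T (X ω) / e GLabel.C (X ω)) :=
      hsm ((he GLabel.T).div (he GLabel.C))
    have hhbd : ∀ ω, ‖e GLabel.T (X ω) / e GLabel.C (X ω)‖ ≤ ε⁻¹ := by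
      intro ω
      rw [Real.norm_eq_abs, abs_of_nonneg (div_nonneg
        (le_trans hε.le (hpos GLabel.T _)) (le_trans hε.le (hpos GLabel.C _)))]
      calc e GLabel.T (X ω) / e GLabel.C (X ω) ≤ 1 / ε :=
            div_le_div₀ zero_le_one (he1 _ _) hε (hpos _ _)
        _ = ε⁻¹ := one_div ε
    have hf1 : Integrable (fun ω => (Y1 ω - Y0 ω) * indG G GLabel.T ω) P :=
      hmulInd _ hΔY _
    have hf2 : Integrable (fun ω => μhatC (X ω) * indG G GLabel.T ω) P := by
      refine hbddInt _ (((hμhatC.comp hX).mul (hIndMeas _)).aestronglyMeasurable) ⟨MC * 1, ?_⟩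
      intro ω
      have h1 : ‖μhatC (X ω)‖ ≤ MC := by rw [Real.norm_eq_abs]; exact hMC _
      rw [norm_mul]
      exact mul_le_mul h1 (hIndBd _ _) (norm_nonneg _) (le_trans (norm_nonneg _) h1)
    have hf3 : Integrable (fun ω => (e GLabel.T (X ω) / e GLabel.C (X ω))
        * ((Y1 ω - Y0 ω) * indG G GLabel.C ω)) P :=
      (hmulInd _ hΔY _).bdd_mul (((he GLabel.T).div (he GLabel.C)).comp hX).aestronglyMeasurable
        (Filter.Eventually.of_forall hhbd)
    have hf4 : Integrable (fun ω => ((e GLabel.T (X ω) / e GLabel.C (X ω)) * μhatC (X ω))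
        * indG G GLabel.C ω) P := by
      refine hbddInt _ ((((((he GLabel.T).div (he GLabel.C)).comp hX).mul
        (hμhatC.comp hX)).mul (hIndMeas _)).aestronglyMeasurable) ⟨ε⁻¹ * MC * 1, ?_⟩
      intro ω
      have h1 : ‖μhatC (X ω)‖ ≤ MC := by rw [Real.norm_eq_abs]; exact hMC _
      have h0 : (0:ℝ) ≤ MC := le_trans (norm_nonneg _) h1
      rw [norm_mul, norm_mul]
      refine mul_le_mul (mul_le_mul (hhbd ω) h1 (norm_nonneg _)
        (le_trans (norm_nonneg _) (hhbd ω))) (hIndBd _ _) (norm_nonneg _) ?_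
      positivity
    -- expand integrand
    have hexp : (fun ω => (indG G GLabel.T ω
          - (e GLabel.T (X ω) / e GLabel.C (X ω)) * indG G GLabel.C ω)
          * ((Y1 ω - Y0 ω) - μhatC (X ω)))
        = (fun ω => ((Y1 ω - Y0 ω) * indG G GLabel.T ω - μhatC (X ω) * indG G GLabel.T ω)
          - ((e GLabel.T (X ω) / e GLabel.C (X ω)) * ((Y1 ω - Y0 ω) * indG G GLabel.C ω)
            - ((e GLabel.T (X ω) / e GLabel.C (X ω)) * μhatC (X ω)) * indG G GLabel.C ω)) := by
      funext ω; ring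
    have hf12 : Integrable (fun ω => (Y1 ω - Y0 ω) * indG G GLabel.T ω
        - μhatC (X ω) * indG G GLabel.T ω) P := hf1.sub hf2
    have hf34 : Integrable (fun ω => (e GLabel.T (X ω) / e GLabel.C (X ω))
        * ((Y1 ω - Y0 ω) * indG G GLabel.C ω)
        - ((e GLabel.T (X ω) / e GLabel.C (X ω)) * μhatC (X ω)) * indG G GLabel.C ω) P :=
      hf3.sub hf4
    rw [hexp, integral_sub hf12 hf34, integral_sub hf1 hf2, integral_sub hf3 hf4]
    -- compute each term
    have hT2 : ∫ ω, μhatC (X ω) * indG G GLabel.T ω ∂P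
        = ∫ ω, μhatC (X ω) * e GLabel.T (X ω) ∂P :=
      pull _ _ _ (hsm hμhatC) (hIndInt _) hf2 (hprop GLabel.T)
    have hT3 : ∫ ω, (e GLabel.T (X ω) / e GLabel.C (X ω))
          * ((Y1 ω - Y0 ω) * indG G GLabel.C ω) ∂P
        = ∫ ω, e GLabel.T (X ω) * ΔμC (X ω) ∂P := by
      rw [pull (fun ω => e GLabel.T (X ω) / e GLabel.C (X ω))
        (fun ω => (Y1 ω - Y0 ω) * indG G GLabel.C ω)
        (fun ω => ΔμC (X ω) * e GLabel.C (X ω)) hhm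
        (hmulInd (fun ω => Y1 ω - Y0 ω) hΔY GLabel.C) hf3 hΔμC.2]
      refine integral_congr_ae (Filter.Eventually.of_forall fun ω => ?_)
      have hc := heC0 (X ω)
      field_simp
    have hT4 : ∫ ω, ((e GLabel.T (X ω) / e GLabel.C (X ω)) * μhatC (X ω))
          * indG G GLabel.C ω ∂P
        = ∫ ω, μhatC (X ω) * e GLabel.T (X ω) ∂P := by
      rw [pull (fun ω => e GLabel.T (X ω) / e GLabel.C (X ω) * μhatC (X ω))
        (indG G GLabel.C) (fun ω => e GLabel.C (X ω))
        (hsm (((he GLabel.T).div (he GLabel.C)).mul hμhatC)) (hIndInt GLabel.C)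
        hf4 (hprop GLabel.C)]
      refine integral_congr_ae (Filter.Eventually.of_forall fun ω => ?_)
      have hc := heC0 (X ω)
      field_simp
    have hT3' : ∫ ω, e GLabel.T (X ω) * ΔμC (X ω) ∂P
        = ∫ ω, (Y100 ω - Y000 ω) * indG G GLabel.T ω ∂P := by
      have h1 : ∫ ω, e GLabel.T (X ω) * ΔμC (X ω) ∂P
          = ∫ ω, gT (X ω) * e GLabel.T (X ω) ∂P := by
        refine integral_congr_ae ?_
        filter_upwards [hL2] with ω h
        rw [h]; ring
      rw [h1, ← integral_condExp hm (f := fun ω => (Y100 ω - Y000 ω) * indG G GLabel.T ω)]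
      exact (integral_congr_ae hgT.2).symm
    rw [hT2, hT3, hT4, hT3', hA, ← hsub]
    ring
  constructor
  · have h1 : (fun ω => (indG G GLabel.T ω / pT) * ((Y1 ω - Y0 ω) - ΔμC (X ω)))
        = (fun ω => pT⁻¹ * (indG G GLabel.T ω * ((Y1 ω - Y0 ω) - ΔμC (X ω)))) := by
      funext ω; ring
    rw [h1, integral_const_mul, key1, div_eq_inv_mul]
  · have h1 : (fun ω => (indG G GLabel.T ω / pT
        - e GLabel.T (X ω) * indG G GLabel.C ω / (pT * e GLabel.C (X ω)))
        * ((Y1 ω - Y0 ω) - μhatC (X ω)))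
        = (fun ω => pT⁻¹ * ((indG G GLabel.T ω
          - (e GLabel.T (X ω) / e GLabel.C (X ω)) * indG G GLabel.C ω)
          * ((Y1 ω - Y0 ω) - μhatC (X ω)))) := by
      funext ω
      have hc : e GLabel.C (X ω) ≠ 0 := heC0 _
      field_simp
    rw [h1, integral_const_mul, key2, div_eq_inv_mul]
end

section
/- (ATN identification.) Under consistency of the potential outcomes and Assumption (A6), with p_N := P(G=N) > 0, E[ ( 1{G=N}/p_N − e_N(X)·1{G=C}/(p_N·e_C(X)) ) · ΔY ] = ATN := E[(Y₁^{(0,1)} − Y₁^{(0,0)})·1{G=N}]/p_N, the average treatment effect of the policy on the neighboring controls. -/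
open MeasureTheory ProbabilityTheory Filter Topology

theorem stmt_10
    {Ω : Type} [MeasurableSpace Ω] (P : Measure Ω) [IsProbabilityMeasure P]
    {q : ℕ} (X : Ω → (Fin q → ℝ)) (hX : Measurable X)
    (G : Ω → GLabel) (hG : Measurable G)
    (Y0 Y1 : Ω → ℝ) (hY0 : Integrable Y0 P) (hY1 : Integrable Y1 P)
    (e : GLabel → (Fin q → ℝ) → ℝ) (he : ∀ g, Measurable (e g))
    (he1 : ∀ g x, e g x ≤ 1)
    (hprop : ∀ g : GLabel,
      P[(fun ω => indG G g ω) | sigmaX X] =ᵐ[P] (fun ω => e g (X ω)))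
    (ε : ℝ) (hε : 0 < ε) (hpos : ∀ g x, ε ≤ e g x)
    (hpN : 0 < (P {ω | G ω = GLabel.N}).toReal)
    (Y110 Y111 Y101 Y100 Y000 : Ω → ℝ)
    (hI10 : Integrable Y110 P) (hI11 : Integrable Y111 P)
    (hI01 : Integrable Y101 P) (hI00 : Integrable Y100 P) (hI000 : Integrable Y000 P)
    (hconsT : ∀ᵐ ω ∂P, G ω = GLabel.T → Y1 ω = Y110 ω)
    (hconsN : ∀ᵐ ω ∂P, G ω = GLabel.N → Y1 ω = Y101 ω)
    (hconsC : ∀ᵐ ω ∂P, G ω = GLabel.C → Y1 ω = Y100 ω)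
    (hcons0 : Y0 =ᵐ[P] Y000)
    (gN gC : (Fin q → ℝ) → ℝ)
    (hgN : IsCondVersion P X G e GLabel.N (fun ω => Y100 ω - Y000 ω) gN)
    (hgC : IsCondVersion P X G e GLabel.C (fun ω => Y100 ω - Y000 ω) gC)
    (hA6 : ∀ᵐ ω ∂P, gN (X ω) = gC (X ω))
    :
    ∫ ω, (indG G GLabel.N ω / (P {ω | G ω = GLabel.N}).toReal
          - e GLabel.N (X ω) * indG G GLabel.C ω / ((P {ω | G ω = GLabel.N}).toReal * e GLabel.C (X ω))) *
        (Y1 ω - Y0 ω) ∂P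
      = (∫ ω, (Y101 ω - Y100 ω) * indG G GLabel.N ω ∂P) / (P {ω | G ω = GLabel.N}).toReal := by
  classical
  have hm : sigmaX X ≤ ‹MeasurableSpace Ω› := hX.comap_le
  haveI : SigmaFinite (P.trim hm) := by
    have : IsFiniteMeasure (P.trim hm) := isFiniteMeasure_trim hm
    infer_instance
  set pN : ℝ := (P {ω | G ω = GLabel.N}).toReal with hpN_def
  set h : Ω → ℝ := fun ω => e GLabel.N (X ω) / e GLabel.C (X ω) with hh_def
  set Z : Ω → ℝ := fun ω => Y100 ω - Y000 ω with hZ_def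
  -- basic facts
  have heps : ∀ g x, 0 < e g x := fun g x => lt_of_lt_of_le hε (hpos g x)
  have hmeasG : ∀ g : GLabel, MeasurableSet {ω | G ω = g} := fun g =>
    hG (show MeasurableSet {x | x = g} from trivial)
  have hindmeas : ∀ g, Measurable (indG G g) := fun g =>
    Measurable.ite (hmeasG g) measurable_const measurable_const
  have hindbd : ∀ g, ∀ ω, ‖indG G g ω‖ ≤ 1 := by
    intro g ω; unfold indG; split <;> simp
  have hhmeas : Measurable h := ((he GLabel.N).comp hX).div ((he GLabel.C).comp hX)
  have hhbd : ∀ ω, ‖h ω‖ ≤ ε⁻¹ := by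
    intro ω
    have h1 : (0:ℝ) ≤ h ω := div_nonneg (heps _ _).le (heps _ _).le
    rw [Real.norm_eq_abs, abs_of_nonneg h1, hh_def, ← one_div]
    exact div_le_div₀ zero_le_one (he1 _ _) hε (hpos _ _)
  -- strongly measurable wrt sigmaX X
  have hXm : Measurable[sigmaX X] X := Measurable.of_comap_le le_rfl
  have hhsm : StronglyMeasurable[sigmaX X] h :=
    (((he GLabel.N).div (he GLabel.C)).comp hXm).stronglyMeasurable
  -- integrabilities
  have hΔ : Integrable (fun ω => Y1 ω - Y0 ω) P := hY1.sub hY0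
  have hZint : Integrable Z P := hI00.sub hI000
  have I1 : Integrable (fun ω => indG G GLabel.N ω * (Y1 ω - Y0 ω)) P :=
    hΔ.bdd_mul (hindmeas _).aestronglyMeasurable (Eventually.of_forall (hindbd _))
  have IC : Integrable (fun ω => indG G GLabel.C ω * (Y1 ω - Y0 ω)) P :=
    hΔ.bdd_mul (hindmeas _).aestronglyMeasurable (Eventually.of_forall (hindbd _))
  have I2 : Integrable (fun ω => h ω * (indG G GLabel.C ω * (Y1 ω - Y0 ω))) P :=
    IC.bdd_mul hhmeas.aestronglyMeasurable (Eventually.of_forall hhbd)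
  have IZN : Integrable (fun ω => Z ω * indG G GLabel.N ω) P := by
    have h1 : Integrable (fun ω => indG G GLabel.N ω * Z ω) P :=
      hZint.bdd_mul (hindmeas GLabel.N).aestronglyMeasurable (Eventually.of_forall (hindbd GLabel.N))
    exact h1.congr (Eventually.of_forall fun ω => mul_comm _ _)
  have IZC : Integrable (fun ω => Z ω * indG G GLabel.C ω) P := by
    have h1 : Integrable (fun ω => indG G GLabel.C ω * Z ω) P :=
      hZint.bdd_mul (hindmeas GLabel.C).aestronglyMeasurable (Eventually.of_forall (hindbd GLabel.C))
    exact h1.congr (Eventually.of_forall fun ω => mul_comm _ _)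
  have IhZC : Integrable (fun ω => h ω * (Z ω * indG G GLabel.C ω)) P :=
    IZC.bdd_mul hhmeas.aestronglyMeasurable (Eventually.of_forall hhbd)
  have I101 : Integrable (fun ω => (Y101 ω - Y100 ω) * indG G GLabel.N ω) P := by
    have h1 : Integrable (fun ω => indG G GLabel.N ω * (Y101 ω - Y100 ω)) P :=
      (hI01.sub hI00).bdd_mul (hindmeas GLabel.N).aestronglyMeasurable (Eventually.of_forall (hindbd GLabel.N))
    exact h1.congr (Eventually.of_forall fun ω => mul_comm _ _)
  -- step 1: rewrite the integrand
  have hstep1 : (fun ω => (indG G GLabel.N ω / pN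
          - e GLabel.N (X ω) * indG G GLabel.C ω / (pN * e GLabel.C (X ω))) *
        (Y1 ω - Y0 ω))
      = fun ω => pN⁻¹ * (indG G GLabel.N ω * (Y1 ω - Y0 ω)
          - h ω * (indG G GLabel.C ω * (Y1 ω - Y0 ω))) := by
    funext ω
    rw [hh_def]
    simp only [div_eq_mul_inv, mul_inv]
    ring
  rw [hstep1, integral_const_mul, integral_sub I1 I2]
  -- step 2: E[indN * ΔY] = E[(Y101 - Y100) indN] + E[Z indN]
  have hAeq : ∫ ω, indG G GLabel.N ω * (Y1 ω - Y0 ω) ∂P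
      = (∫ ω, (Y101 ω - Y100 ω) * indG G GLabel.N ω ∂P) + ∫ ω, Z ω * indG G GLabel.N ω ∂P := by
    rw [← integral_add I101 IZN]
    refine integral_congr_ae ?_
    filter_upwards [hconsN, hcons0] with ω h1 h0
    rw [hZ_def]
    unfold indG
    by_cases hw : G ω = GLabel.N
    · simp only [hw, if_pos rfl, mul_one, one_mul]
      rw [h1 hw, h0]; ring
    · simp [hw]
  -- step 3: E[h * indC * ΔY] = E[h * (Z indC)]
  have hBeq : ∫ ω, h ω * (indG G GLabel.C ω * (Y1 ω - Y0 ω)) ∂P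
      = ∫ ω, h ω * (Z ω * indG G GLabel.C ω) ∂P := by
    refine integral_congr_ae ?_
    filter_upwards [hconsC, hcons0] with ω h1 h0
    rw [hZ_def]
    unfold indG
    by_cases hw : G ω = GLabel.C
    · simp only [hw, if_pos rfl, mul_one, one_mul]
      rw [h1 hw, h0]
      ring
    · simp [hw]
  -- step 4: E[Z indN] = ∫ gN(X) eN(X)
  have h4 : ∫ ω, Z ω * indG G GLabel.N ω ∂P = ∫ ω, gN (X ω) * e GLabel.N (X ω) ∂P := by
    rw [← integral_condExp (f := fun ω => Z ω * indG G GLabel.N ω) hm]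
    exact integral_congr_ae hgN.2
  -- step 5: E[h * (Z indC)] = ∫ gN(X) eN(X)
  have h5 : ∫ ω, h ω * (Z ω * indG G GLabel.C ω) ∂P = ∫ ω, gN (X ω) * e GLabel.N (X ω) ∂P := by
    have hpull := condExp_mul_of_stronglyMeasurable_left (μ := P)
      (f := h) (g := fun ω => Z ω * indG G GLabel.C ω) hhsm
      (by exact IhZC) IZC
    calc ∫ ω, h ω * (Z ω * indG G GLabel.C ω) ∂P
        = ∫ ω, (P[(fun ω => h ω * (Z ω * indG G GLabel.C ω)) | sigmaX X]) ω ∂P := by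
          rw [integral_condExp hm]
      _ = ∫ ω, gN (X ω) * e GLabel.N (X ω) ∂P := by
          refine integral_congr_ae ?_
          have hmulae : (fun ω => h ω * (Z ω * indG G GLabel.C ω)) = h * (fun ω => Z ω * indG G GLabel.C ω) := rfl
          rw [hmulae]
          filter_upwards [hpull, hgC.2, hA6] with ω hp hc h6
          rw [hp]
          simp only [Pi.mul_apply]
          rw [hc, h6, hh_def]
          have hne : e GLabel.C (X ω) ≠ 0 := (heps GLabel.C (X ω)).ne'
          field_simp
  rw [hAeq, hBeq, h4, h5]
  rw [add_sub_cancel_right]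
  rw [inv_mul_eq_div]
end

section
/- (Population version of Corollary 1: identification of the average offset treatment effect on the treated, AOTT.) Under consistency of the potential outcomes and Assumptions (A4), (A5) and (A6), if Δμ_C is a version of E[ΔY ∣ G=C, X], then E[ (1{G=T}/p_T) · (ΔY − Δμ_C(X)) ] + E[ (e_T(X)/p_T) · ( 1{G=N}/e_N(X) − 1{G=C}/e_C(X) ) · ΔY ] = τ := E[(Y₁^{(1,1)} − Y₁^{(0,0)})·1{G=T}]/p_T. In particular τ = ATT + δ, where ATT := E[(Y₁^{(1,0)} − Y₁^{(0,0)})·1{G=T}]/p_T and δ := E[(Y₁^{(1,1)} − Y₁^{(1,0)})·1{G=T}]/p_T. -/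
open MeasureTheory ProbabilityTheory Filter Topology

theorem stmt_11
    {Ω : Type} [MeasurableSpace Ω] (P : Measure Ω) [IsProbabilityMeasure P]
    {q : ℕ} (X : Ω → (Fin q → ℝ)) (hX : Measurable X)
    (G : Ω → GLabel) (hG : Measurable G)
    (Y0 Y1 : Ω → ℝ) (hY0 : Integrable Y0 P) (hY1 : Integrable Y1 P)
    (e : GLabel → (Fin q → ℝ) → ℝ) (he : ∀ g, Measurable (e g))
    (he1 : ∀ g x, e g x ≤ 1)
    (hprop : ∀ g : GLabel,
      P[(fun ω => indG G g ω) | sigmaX X] =ᵐ[P] (fun ω => e g (X ω)))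
    (ε : ℝ) (hε : 0 < ε) (hpos : ∀ g x, ε ≤ e g x)
    (hpT : 0 < (P {ω | G ω = GLabel.T}).toReal)
    (Y110 Y111 Y101 Y100 Y000 : Ω → ℝ)
    (hI10 : Integrable Y110 P) (hI11 : Integrable Y111 P)
    (hI01 : Integrable Y101 P) (hI00 : Integrable Y100 P) (hI000 : Integrable Y000 P)
    (hconsT : ∀ᵐ ω ∂P, G ω = GLabel.T → Y1 ω = Y110 ω)
    (hconsN : ∀ᵐ ω ∂P, G ω = GLabel.N → Y1 ω = Y101 ω)
    (hconsC : ∀ᵐ ω ∂P, G ω = GLabel.C → Y1 ω = Y100 ω)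
    (hcons0 : Y0 =ᵐ[P] Y000)
    (gN gC : (Fin q → ℝ) → ℝ)
    (hgN : IsCondVersion P X G e GLabel.N (fun ω => Y100 ω - Y000 ω) gN)
    (hgC : IsCondVersion P X G e GLabel.C (fun ω => Y100 ω - Y000 ω) gC)
    (hA6 : ∀ᵐ ω ∂P, gN (X ω) = gC (X ω))
    (gT : (Fin q → ℝ) → ℝ)
    (hgT : IsCondVersion P X G e GLabel.T (fun ω => Y100 ω - Y000 ω) gT)
    (hA4 : ∀ᵐ ω ∂P, gT (X ω) = gC (X ω))
    (fT fN : (Fin q → ℝ) → ℝ)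
    (hfT : IsCondVersion P X G e GLabel.T (fun ω => Y110 ω - Y111 ω) fT)
    (hfN : IsCondVersion P X G e GLabel.N (fun ω => Y101 ω - Y100 ω) fN)
    (hA5 : ∀ᵐ ω ∂P, fT (X ω) + fN (X ω) = 0)
    (ΔμC : (Fin q → ℝ) → ℝ)
    (hΔμC : IsCondVersion P X G e GLabel.C (fun ω => Y1 ω - Y0 ω) ΔμC)
    :
    ((∫ ω, (indG G GLabel.T ω / (P {ω | G ω = GLabel.T}).toReal) * ((Y1 ω - Y0 ω) - ΔμC (X ω)) ∂P)
        + (∫ ω, (e GLabel.T (X ω) / (P {ω | G ω = GLabel.T}).toReal) *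
            (indG G GLabel.N ω / e GLabel.N (X ω) - indG G GLabel.C ω / e GLabel.C (X ω)) *
            (Y1 ω - Y0 ω) ∂P)
        = (∫ ω, (Y111 ω - Y100 ω) * indG G GLabel.T ω ∂P) / (P {ω | G ω = GLabel.T}).toReal) ∧
      ((∫ ω, (Y111 ω - Y100 ω) * indG G GLabel.T ω ∂P) / (P {ω | G ω = GLabel.T}).toReal
        = (∫ ω, (Y110 ω - Y100 ω) * indG G GLabel.T ω ∂P) / (P {ω | G ω = GLabel.T}).toReal + (∫ ω, (Y111 ω - Y110 ω) * indG G GLabel.T ω ∂P) / (P {ω | G ω = GLabel.T}).toReal) := by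
  classical
  have hm : sigmaX X ≤ ‹MeasurableSpace Ω› := measurable_iff_comap_le.mp hX
  have hXm : Measurable[sigmaX X] X := measurable_iff_comap_le.mpr le_rfl
  set pT : ℝ := (P {ω | G ω = GLabel.T}).toReal with hpTdef
  -- indicator basics
  have hIndMeas : ∀ g : GLabel, Measurable (indG G g) := by
    intro g
    have h0 : MeasurableSet (G ⁻¹' {g}) := hG (MeasurableSpace.measurableSet_top)
    have : MeasurableSet {ω | G ω = g} := h0
    exact Measurable.ite this measurable_const measurable_const
  have hIndBd : ∀ g ω, |indG G g ω| ≤ 1 := by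
    intro g ω; unfold indG; split <;> norm_num
  -- product with indicator (and bounded functions) is integrable
  have mulBdd : ∀ (Z : Ω → ℝ), Integrable Z P → ∀ (b : Ω → ℝ), AEStronglyMeasurable b P →
      ∀ c : ℝ, (∀ ω, |b ω| ≤ c) → Integrable (fun ω => b ω * Z ω) P := by
    intro Z hZ b hb c hc
    refine Integrable.mono' ((hZ.norm.const_mul c)) (hb.mul hZ.aestronglyMeasurable) ?_
    refine Filter.Eventually.of_forall fun ω => ?_
    have h0 : (0:ℝ) ≤ |b ω| := abs_nonneg _
    calc ‖b ω * Z ω‖ = |b ω| * ‖Z ω‖ := by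
          simp [abs_mul, Real.norm_eq_abs]
      _ ≤ c * ‖Z ω‖ := by
          exact mul_le_mul_of_nonneg_right (hc ω) (norm_nonneg _)
  have mulInd : ∀ (Z : Ω → ℝ), Integrable Z P → ∀ g : GLabel,
      Integrable (fun ω => Z ω * indG G g ω) P := by
    intro Z hZ g
    have := mulBdd Z hZ (indG G g) (hIndMeas g).aestronglyMeasurable 1 (hIndBd g)
    refine this.congr (Filter.Eventually.of_forall fun ω => mul_comm _ _)
  -- a version f(X) is integrable
  have hIntV : ∀ (Z : Ω → ℝ) (g : GLabel) (f : (Fin q → ℝ) → ℝ),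
      IsCondVersion P X G e g Z f → Integrable (fun ω => f (X ω)) P := by
    intro Z g f hf
    have hce : Integrable (P[(fun ω => Z ω * indG G g ω)|sigmaX X]) P := integrable_condExp
    refine Integrable.mono' (hce.norm.const_mul ε⁻¹)
      ((hf.1.comp hX).aestronglyMeasurable) ?_
    filter_upwards [hf.2] with ω hω
    have hεe : ε ≤ e g (X ω) := hpos g (X ω)
    have he0 : (0:ℝ) ≤ e g (X ω) := le_trans (le_of_lt hε) hεe
    have h1 : ‖(P[(fun ω => Z ω * indG G g ω)|sigmaX X]) ω‖ = |f (X ω)| * e g (X ω) := by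
      rw [hω]; rw [Real.norm_eq_abs, abs_mul, abs_of_nonneg he0]
    rw [Real.norm_eq_abs, h1]
    calc |f (X ω)| = ε⁻¹ * (|f (X ω)| * ε) := by field_simp
      _ ≤ ε⁻¹ * (|f (X ω)| * e g (X ω)) := by
          refine mul_le_mul_of_nonneg_left ?_ (inv_nonneg.mpr hε.le)
          exact mul_le_mul_of_nonneg_left hεe (abs_nonneg _)
  -- pull-out key lemma
  have key2 : ∀ (φ : (Fin q → ℝ) → ℝ), Measurable φ → ∀ (W : Ω → ℝ), Integrable W P →
      Integrable (fun ω => φ (X ω) * W ω) P → ∀ (V : Ω → ℝ),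
      P[W|sigmaX X] =ᵐ[P] V →
      ∫ ω, φ (X ω) * W ω ∂P = ∫ ω, φ (X ω) * V ω ∂P := by
    intro φ hφ W hW hprod V hV
    have hφm : StronglyMeasurable[sigmaX X] (fun ω => φ (X ω)) :=
      (hφ.comp hXm).stronglyMeasurable
    have hmul : P[(fun ω => φ (X ω)) * W|sigmaX X]
        =ᵐ[P] (fun ω => φ (X ω)) * P[W|sigmaX X] :=
      condExp_mul_of_stronglyMeasurable_left hφm hprod hW
    calc ∫ ω, φ (X ω) * W ω ∂P
        = ∫ ω, (P[(fun ω => φ (X ω)) * W|sigmaX X]) ω ∂P := (integral_condExp hm).symm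
      _ = ∫ ω, φ (X ω) * V ω ∂P := by
          refine integral_congr_ae (hmul.trans ?_)
          filter_upwards [hV] with ω hω
          simp only [Pi.mul_apply, hω]
  have key1 : ∀ (W : Ω → ℝ) (V : Ω → ℝ), P[W|sigmaX X] =ᵐ[P] V →
      ∫ ω, W ω ∂P = ∫ ω, V ω ∂P := by
    intro W V hV
    calc ∫ ω, W ω ∂P = ∫ ω, (P[W|sigmaX X]) ω ∂P := (integral_condExp hm).symm
      _ = ∫ ω, V ω ∂P := integral_congr_ae hV
  -- consistency rewrites
  have hD : Integrable (fun ω => Y1 ω - Y0 ω) P := hY1.sub hY0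
  have consT : (fun ω => (Y1 ω - Y0 ω) * indG G GLabel.T ω)
      =ᵐ[P] (fun ω => (Y110 ω - Y000 ω) * indG G GLabel.T ω) := by
    filter_upwards [hconsT, hcons0] with ω h1 h0
    by_cases h : G ω = GLabel.T
    · simp only [indG, if_pos h, mul_one, h1 h, h0]
    · simp [indG, if_neg h]
  have consN : (fun ω => (Y1 ω - Y0 ω) * indG G GLabel.N ω)
      =ᵐ[P] (fun ω => (Y101 ω - Y100 ω) * indG G GLabel.N ω
              + (Y100 ω - Y000 ω) * indG G GLabel.N ω) := by
    filter_upwards [hconsN, hcons0] with ω h1 h0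
    by_cases h : G ω = GLabel.N
    · simp only [indG, if_pos h, mul_one, h1 h, h0]; ring
    · simp [indG, if_neg h]
  have consC : (fun ω => (Y1 ω - Y0 ω) * indG G GLabel.C ω)
      =ᵐ[P] (fun ω => (Y100 ω - Y000 ω) * indG G GLabel.C ω) := by
    filter_upwards [hconsC, hcons0] with ω h1 h0
    by_cases h : G ω = GLabel.C
    · simp only [indG, if_pos h, mul_one, h1 h, h0]
    · simp [indG, if_neg h]
  -- ΔμC = gC a.e. (composed with X)
  have hgCeq : (fun ω => ΔμC (X ω)) =ᵐ[P] (fun ω => gC (X ω)) := by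
    have h1 : (fun ω => ΔμC (X ω) * e GLabel.C (X ω))
        =ᵐ[P] (fun ω => gC (X ω) * e GLabel.C (X ω)) :=
      hΔμC.2.symm.trans ((condExp_congr_ae consC).trans hgC.2)
    filter_upwards [h1] with ω hω
    have hne : e GLabel.C (X ω) ≠ 0 := ne_of_gt (lt_of_lt_of_le hε (hpos _ _))
    exact mul_right_cancel₀ hne hω
  -- conditional expectation versions needed
  have hNver : P[(fun ω => (Y1 ω - Y0 ω) * indG G GLabel.N ω)|sigmaX X]
      =ᵐ[P] (fun ω => (fN (X ω) + gN (X ω)) * e GLabel.N (X ω)) := by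
    have h1 := condExp_congr_ae (μ := P) (m := sigmaX X) consN
    have h2 := condExp_add (μ := P) (m := sigmaX X)
      (f := fun ω => (Y101 ω - Y100 ω) * indG G GLabel.N ω)
      (g := fun ω => (Y100 ω - Y000 ω) * indG G GLabel.N ω)
      (mulInd _ (hI01.sub hI00) GLabel.N) (mulInd _ (hI00.sub hI000) GLabel.N)
    refine (h1.trans (h2.trans ?_))
    filter_upwards [hfN.2, hgN.2] with ω hω1 hω2
    simp only [Pi.add_apply, hω1, hω2]; ring
  -- integrability of various products
  have hIgC : Integrable (fun ω => gC (X ω)) P := hIntV _ _ _ hgC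
  have hIgN : Integrable (fun ω => gN (X ω)) P := hIntV _ _ _ hgN
  have hIgT : Integrable (fun ω => gT (X ω)) P := hIntV _ _ _ hgT
  have hIfT : Integrable (fun ω => fT (X ω)) P := hIntV _ _ _ hfT
  have hIfN : Integrable (fun ω => fN (X ω)) P := hIntV _ _ _ hfN
  have hIΔμC : Integrable (fun ω => ΔμC (X ω)) P := hIntV _ _ _ hΔμC
  have heTbd : ∀ x, |e GLabel.T x| ≤ 1 := fun x =>
    abs_le.mpr ⟨le_trans (by linarith) (hpos GLabel.T x), he1 GLabel.T x⟩
  have heTmX : AEStronglyMeasurable (fun ω => e GLabel.T (X ω)) P :=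
    ((he GLabel.T).comp hX).aestronglyMeasurable
  -- TERM 1 : ∫ indT * (ΔY - ΔμC X)
  have hT1a : Integrable (fun ω => (Y1 ω - Y0 ω) * indG G GLabel.T ω) P :=
    mulInd _ hD GLabel.T
  have hT1b : Integrable (fun ω => ΔμC (X ω) * indG G GLabel.T ω) P :=
    mulInd _ hIΔμC GLabel.T
  have hIndInt : ∀ g, Integrable (indG G g) P := by
    intro g
    have := mulInd (fun _ => (1:ℝ)) (integrable_const 1) g
    simpa using this
  have eq1 : ∫ ω, indG G GLabel.T ω * ((Y1 ω - Y0 ω) - ΔμC (X ω)) ∂P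
      = (∫ ω, (Y110 ω - Y000 ω) * indG G GLabel.T ω ∂P)
        - ∫ ω, gC (X ω) * e GLabel.T (X ω) ∂P := by
    have e0 : ∫ ω, indG G GLabel.T ω * ((Y1 ω - Y0 ω) - ΔμC (X ω)) ∂P
        = (∫ ω, (Y1 ω - Y0 ω) * indG G GLabel.T ω ∂P)
          - ∫ ω, ΔμC (X ω) * indG G GLabel.T ω ∂P := by
      rw [← integral_sub hT1a hT1b]
      exact integral_congr_ae (Filter.Eventually.of_forall fun ω => by ring)
    rw [e0, integral_congr_ae consT]
    congr 1
    have e1 : ∫ ω, ΔμC (X ω) * indG G GLabel.T ω ∂P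
        = ∫ ω, gC (X ω) * indG G GLabel.T ω ∂P := by
      refine integral_congr_ae ?_
      filter_upwards [hgCeq] with ω hω; rw [hω]
    rw [e1]
    exact key2 gC hgC.1 (indG G GLabel.T) (hIndInt GLabel.T)
      (mulInd _ hIgC GLabel.T)
      _ (hprop GLabel.T)
  -- TERM 2 pieces
  have hφN : Measurable (fun x => e GLabel.T x / e GLabel.N x) := (he GLabel.T).div (he GLabel.N)
  have hφC : Measurable (fun x => e GLabel.T x / e GLabel.C x) := (he GLabel.T).div (he GLabel.C)
  have hratbd : ∀ g x, |e GLabel.T x / e g x| ≤ ε⁻¹ := by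
    intro g x
    have h1 : ε ≤ e g x := hpos g x
    have h2 : 0 < e g x := lt_of_lt_of_le hε h1
    have h3 : 0 ≤ e GLabel.T x := le_trans hε.le (hpos _ _)
    rw [abs_of_nonneg (div_nonneg h3 h2.le)]
    rw [div_le_iff₀ h2]
    calc e GLabel.T x ≤ 1 := he1 _ _
      _ = ε⁻¹ * ε := by field_simp
      _ ≤ ε⁻¹ * e g x := mul_le_mul_of_nonneg_left h1 (inv_nonneg.mpr hε.le)
  have hDN : Integrable (fun ω => (Y1 ω - Y0 ω) * indG G GLabel.N ω) P := mulInd _ hD GLabel.N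
  have hDC : Integrable (fun ω => (Y1 ω - Y0 ω) * indG G GLabel.C ω) P := mulInd _ hD GLabel.C
  have hprodN : Integrable (fun ω => (e GLabel.T (X ω) / e GLabel.N (X ω)) *
      ((Y1 ω - Y0 ω) * indG G GLabel.N ω)) P :=
    mulBdd _ hDN _ ((hφN.comp hX).aestronglyMeasurable) ε⁻¹ (fun ω => hratbd GLabel.N (X ω))
  have hprodC : Integrable (fun ω => (e GLabel.T (X ω) / e GLabel.C (X ω)) *
      ((Y1 ω - Y0 ω) * indG G GLabel.C ω)) P :=
    mulBdd _ hDC _ ((hφC.comp hX).aestronglyMeasurable) ε⁻¹ (fun ω => hratbd GLabel.C (X ω))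
  have hIeTfN : Integrable (fun ω => e GLabel.T (X ω) * fN (X ω)) P :=
    mulBdd _ hIfN _ heTmX 1 (fun ω => heTbd (X ω))
  have hIeTgN : Integrable (fun ω => e GLabel.T (X ω) * gN (X ω)) P :=
    mulBdd _ hIgN _ heTmX 1 (fun ω => heTbd (X ω))
  -- link: ∫ gC·eT = ∫ (Y100-Y000)·1T
  have beq : ∫ ω, gC (X ω) * e GLabel.T (X ω) ∂P
      = ∫ ω, (Y100 ω - Y000 ω) * indG G GLabel.T ω ∂P := by
    have e1 : ∫ ω, gC (X ω) * e GLabel.T (X ω) ∂P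
        = ∫ ω, gT (X ω) * e GLabel.T (X ω) ∂P := by
      refine integral_congr_ae ?_
      filter_upwards [hA4] with ω hω; rw [hω]
    rw [e1]
    exact (key1 _ _ hgT.2).symm
  -- eq2N
  have eq2N : ∫ ω, (e GLabel.T (X ω) / e GLabel.N (X ω)) *
        ((Y1 ω - Y0 ω) * indG G GLabel.N ω) ∂P
      = (∫ ω, (Y111 ω - Y110 ω) * indG G GLabel.T ω ∂P)
        + ∫ ω, (Y100 ω - Y000 ω) * indG G GLabel.T ω ∂P := by
    have s1 := key2 (fun x => e GLabel.T x / e GLabel.N x) hφN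
      (fun ω => (Y1 ω - Y0 ω) * indG G GLabel.N ω) hDN hprodN
      (fun ω => (fN (X ω) + gN (X ω)) * e GLabel.N (X ω)) hNver
    rw [s1]
    have s2 : ∫ ω, (e GLabel.T (X ω) / e GLabel.N (X ω)) *
          ((fN (X ω) + gN (X ω)) * e GLabel.N (X ω)) ∂P
        = ∫ ω, (e GLabel.T (X ω) * fN (X ω) + e GLabel.T (X ω) * gN (X ω)) ∂P := by
      refine integral_congr_ae (Filter.Eventually.of_forall fun ω => ?_)
      have hne : e GLabel.N (X ω) ≠ 0 := ne_of_gt (lt_of_lt_of_le hε (hpos _ _))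
      field_simp
    rw [s2, integral_add hIeTfN hIeTgN]
    congr 1
    · -- ∫ eT·fN = ∫ (Y111-Y110)·1T
      have e1 : ∫ ω, e GLabel.T (X ω) * fN (X ω) ∂P
          = ∫ ω, -(fT (X ω) * e GLabel.T (X ω)) ∂P := by
        refine integral_congr_ae ?_
        filter_upwards [hA5] with ω hω
        have : fN (X ω) = -fT (X ω) := by linarith
        rw [this]; ring
      rw [e1, integral_neg, ← key1 _ _ hfT.2, ← integral_neg]
      refine integral_congr_ae (Filter.Eventually.of_forall fun ω => by ring)
    · -- ∫ eT·gN = ∫ (Y100-Y000)·1T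
      have e1 : ∫ ω, e GLabel.T (X ω) * gN (X ω) ∂P
          = ∫ ω, gC (X ω) * e GLabel.T (X ω) ∂P := by
        refine integral_congr_ae ?_
        filter_upwards [hA6] with ω hω; rw [hω]; ring
      rw [e1, beq]
  -- eq2C
  have eq2C : ∫ ω, (e GLabel.T (X ω) / e GLabel.C (X ω)) *
        ((Y1 ω - Y0 ω) * indG G GLabel.C ω) ∂P
      = ∫ ω, (Y100 ω - Y000 ω) * indG G GLabel.T ω ∂P := by
    have s1 := key2 (fun x => e GLabel.T x / e GLabel.C x) hφC
      (fun ω => (Y1 ω - Y0 ω) * indG G GLabel.C ω) hDC hprodC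
      (fun ω => ΔμC (X ω) * e GLabel.C (X ω)) hΔμC.2
    rw [s1, ← beq]
    refine integral_congr_ae ?_
    filter_upwards [hgCeq] with ω hω
    have hne : e GLabel.C (X ω) ≠ 0 := ne_of_gt (lt_of_lt_of_le hε (hpos _ _))
    rw [hω]
    field_simp
  -- combine numerators
  have hi1 : Integrable (fun ω => (Y110 ω - Y000 ω) * indG G GLabel.T ω) P :=
    mulInd _ (hI10.sub hI000) GLabel.T
  have hi2 : Integrable (fun ω => (Y111 ω - Y110 ω) * indG G GLabel.T ω) P :=
    mulInd _ (hI11.sub hI10) GLabel.T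
  have hi3 : Integrable (fun ω => (Y100 ω - Y000 ω) * indG G GLabel.T ω) P :=
    mulInd _ (hI00.sub hI000) GLabel.T
  have hi4 : Integrable (fun ω => (Y110 ω - Y100 ω) * indG G GLabel.T ω) P :=
    mulInd _ (hI10.sub hI00) GLabel.T
  have numfinal : (∫ ω, (Y111 ω - Y100 ω) * indG G GLabel.T ω ∂P)
      = ((∫ ω, (Y110 ω - Y000 ω) * indG G GLabel.T ω ∂P)
          + ∫ ω, (Y111 ω - Y110 ω) * indG G GLabel.T ω ∂P)
        - ∫ ω, (Y100 ω - Y000 ω) * indG G GLabel.T ω ∂P := by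
    have hi12 : Integrable (fun ω => (Y110 ω - Y000 ω) * indG G GLabel.T ω
        + (Y111 ω - Y110 ω) * indG G GLabel.T ω) P := hi1.add hi2
    have h1 : ∫ ω, (Y111 ω - Y100 ω) * indG G GLabel.T ω ∂P
        = ∫ ω, ((Y110 ω - Y000 ω) * indG G GLabel.T ω
            + (Y111 ω - Y110 ω) * indG G GLabel.T ω
            - (Y100 ω - Y000 ω) * indG G GLabel.T ω) ∂P :=
      integral_congr_ae (Filter.Eventually.of_forall fun ω => by ring)
    rw [h1, integral_sub hi12 hi3, integral_add hi1 hi2]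
  constructor
  · -- first conjunct
    have g1 : ∫ ω, (indG G GLabel.T ω / pT) * ((Y1 ω - Y0 ω) - ΔμC (X ω)) ∂P
        = pT⁻¹ * ∫ ω, indG G GLabel.T ω * ((Y1 ω - Y0 ω) - ΔμC (X ω)) ∂P := by
      rw [← integral_const_mul]
      refine integral_congr_ae (Filter.Eventually.of_forall fun ω => by ring)
    have g2 : ∫ ω, (e GLabel.T (X ω) / pT) *
          (indG G GLabel.N ω / e GLabel.N (X ω) - indG G GLabel.C ω / e GLabel.C (X ω)) *
          (Y1 ω - Y0 ω) ∂P
        = pT⁻¹ * ((∫ ω, (e GLabel.T (X ω) / e GLabel.N (X ω)) *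
              ((Y1 ω - Y0 ω) * indG G GLabel.N ω) ∂P)
            - ∫ ω, (e GLabel.T (X ω) / e GLabel.C (X ω)) *
              ((Y1 ω - Y0 ω) * indG G GLabel.C ω) ∂P) := by
      rw [← integral_sub hprodN hprodC, ← integral_const_mul]
      refine integral_congr_ae (Filter.Eventually.of_forall fun ω => by ring)
    rw [g1, g2, eq1, eq2N, eq2C, beq, numfinal, div_eq_inv_mul]
    ring
  · -- second conjunct
    rw [← add_div]
    congr 1
    rw [← integral_add hi4 hi2]
    refine integral_congr_ae (Filter.Eventually.of_forall fun ω => by ring)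
end

section
/- (Mean-zero property of the efficient influence function of Theorem 2.) Let Δμ_N and Δμ_C be versions of E[ΔY ∣ G=N, X] and E[ΔY ∣ G=C, X], and define ψ_δ := (e_T(X)/p_T)·(1{G=N}/e_N(X))·(ΔY − Δμ_N(X)) + (1{G=T}/p_T)·Δμ_N(X) − [ (e_T(X)/p_T)·(1{G=C}/e_C(X))·(ΔY − Δμ_C(X)) + (1{G=T}/p_T)·Δμ_C(X) ] − (1{G=T}/p_T)·δ, where δ := E[(Y₁^{(1,1)} − Y₁^{(1,0)})·1{G=T}]/p_T. Under consistency of the potential outcomes and Assumptions (A5) and (A6), ψ_δ is integrable and E[ψ_δ] = 0. -/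
open MeasureTheory ProbabilityTheory Filter Topology

set_option linter.unusedSectionVars false
set_option linter.unusedVariables false

section Helpers
variable {Ω : Type} [MeasurableSpace Ω] {P : Measure Ω} [IsProbabilityMeasure P]
  {q : ℕ} {X : Ω → (Fin q → ℝ)} {G : Ω → GLabel}

lemma indG_abs_le (G : Ω → GLabel) (g : GLabel) (ω : Ω) : ‖indG G g ω‖ ≤ 1 := by
  unfold indG; split <;> simp

lemma integrable_mul_indG (hG : Measurable G) {Z : Ω → ℝ} (hZ : Integrable Z P) (g : GLabel) :
    Integrable (fun ω => Z ω * indG G g ω) P :=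
  ((hZ.bdd_mul (measurable_indG hG g).aestronglyMeasurable
    (ae_of_all _ (indG_abs_le G g))).congr (ae_of_all _ fun ω => mul_comm _ _))

lemma mul_bdd_int {Z b : Ω → ℝ} (hZ : Integrable Z P) (hb : AEStronglyMeasurable b P)
    (C : ℝ) (hC : ∀ ω, ‖b ω‖ ≤ C) : Integrable (fun ω => Z ω * b ω) P :=
  (hZ.bdd_mul hb (ae_of_all _ hC)).congr (ae_of_all _ fun ω => mul_comm _ _)

lemma key_integral (hX : Measurable X) {b : (Fin q → ℝ) → ℝ} (hb : Measurable b)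
    {Z : Ω → ℝ} (hZ : Integrable Z P)
    (hbZ : Integrable (fun ω => b (X ω) * Z ω) P)
    {w : Ω → ℝ} (hw : P[Z | sigmaX X] =ᵐ[P] w) :
    ∫ ω, b (X ω) * Z ω ∂P = ∫ ω, b (X ω) * w ω ∂P := by
  have hle : sigmaX X ≤ ‹MeasurableSpace Ω› := hX.comap_le
  have hsm : StronglyMeasurable[sigmaX X] (fun ω => b (X ω)) :=
    (hb.comp (comap_measurable X)).stronglyMeasurable
  have h2 : P[(fun ω => b (X ω)) * Z | sigmaX X]
      =ᵐ[P] (fun ω => b (X ω)) * P[Z | sigmaX X] :=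
    condExp_mul_of_stronglyMeasurable_left hsm hbZ hZ
  have h1 : ∫ ω, b (X ω) * Z ω ∂P
      = ∫ ω, (P[(fun ω => b (X ω)) * Z | sigmaX X]) ω ∂P :=
    (integral_condExp hle).symm
  rw [h1, integral_congr_ae (h2.trans ?_)]
  filter_upwards [hw] with ω hω
  simp only [Pi.mul_apply, hω]
end Helpers

theorem stmt_12
    {Ω : Type} [MeasurableSpace Ω] (P : Measure Ω) [IsProbabilityMeasure P]
    {q : ℕ} (X : Ω → (Fin q → ℝ)) (hX : Measurable X)
    (G : Ω → GLabel) (hG : Measurable G)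
    (Y0 Y1 : Ω → ℝ) (hY0 : Integrable Y0 P) (hY1 : Integrable Y1 P)
    (e : GLabel → (Fin q → ℝ) → ℝ) (he : ∀ g, Measurable (e g))
    (he1 : ∀ g x, e g x ≤ 1)
    (hprop : ∀ g : GLabel,
      P[(fun ω => indG G g ω) | sigmaX X] =ᵐ[P] (fun ω => e g (X ω)))
    (ε : ℝ) (hε : 0 < ε) (hpos : ∀ g x, ε ≤ e g x)
    (hpT : 0 < (P {ω | G ω = GLabel.T}).toReal)
    (Y110 Y111 Y101 Y100 Y000 : Ω → ℝ)
    (hI10 : Integrable Y110 P) (hI11 : Integrable Y111 P)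
    (hI01 : Integrable Y101 P) (hI00 : Integrable Y100 P) (hI000 : Integrable Y000 P)
    (hconsT : ∀ᵐ ω ∂P, G ω = GLabel.T → Y1 ω = Y110 ω)
    (hconsN : ∀ᵐ ω ∂P, G ω = GLabel.N → Y1 ω = Y101 ω)
    (hconsC : ∀ᵐ ω ∂P, G ω = GLabel.C → Y1 ω = Y100 ω)
    (hcons0 : Y0 =ᵐ[P] Y000)
    (fT fN : (Fin q → ℝ) → ℝ)
    (hfT : IsCondVersion P X G e GLabel.T (fun ω => Y110 ω - Y111 ω) fT)
    (hfN : IsCondVersion P X G e GLabel.N (fun ω => Y101 ω - Y100 ω) fN)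
    (hA5 : ∀ᵐ ω ∂P, fT (X ω) + fN (X ω) = 0)
    (gN gC : (Fin q → ℝ) → ℝ)
    (hgN : IsCondVersion P X G e GLabel.N (fun ω => Y100 ω - Y000 ω) gN)
    (hgC : IsCondVersion P X G e GLabel.C (fun ω => Y100 ω - Y000 ω) gC)
    (hA6 : ∀ᵐ ω ∂P, gN (X ω) = gC (X ω))
    (ΔμN ΔμC : (Fin q → ℝ) → ℝ)
    (hΔμN : IsCondVersion P X G e GLabel.N (fun ω => Y1 ω - Y0 ω) ΔμN)
    (hΔμC : IsCondVersion P X G e GLabel.C (fun ω => Y1 ω - Y0 ω) ΔμC)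
    (ψ : Ω → ℝ)
    (hψ : ∀ ω, ψ ω =
      (e GLabel.T (X ω) / (P {ω | G ω = GLabel.T}).toReal) * (indG G GLabel.N ω / e GLabel.N (X ω)) *
          ((Y1 ω - Y0 ω) - ΔμN (X ω))
        + (indG G GLabel.T ω / (P {ω | G ω = GLabel.T}).toReal) * ΔμN (X ω)
        - ((e GLabel.T (X ω) / (P {ω | G ω = GLabel.T}).toReal) * (indG G GLabel.C ω / e GLabel.C (X ω)) *
            ((Y1 ω - Y0 ω) - ΔμC (X ω))
          + (indG G GLabel.T ω / (P {ω | G ω = GLabel.T}).toReal) * ΔμC (X ω))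
        - (indG G GLabel.T ω / (P {ω | G ω = GLabel.T}).toReal) *
            ((∫ ω, (Y111 ω - Y110 ω) * indG G GLabel.T ω ∂P) / (P {ω | G ω = GLabel.T}).toReal))
    :
    Integrable ψ P ∧ ∫ ω, ψ ω ∂P = 0 := by
  classical
  have hle : sigmaX X ≤ ‹MeasurableSpace Ω› := hX.comap_le
  set pT := (P {ω | G ω = GLabel.T}).toReal with hpTdef
  set J := ∫ ω, (Y111 ω - Y110 ω) * indG G GLabel.T ω ∂P with hJdef
  have hpT0 : pT ≠ 0 := ne_of_gt hpT
  have hεg : ∀ g x, (0:ℝ) < e g x := fun g x => lt_of_lt_of_le hε (hpos g x)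
  have hΔY : Integrable (fun ω => Y1 ω - Y0 ω) P := hY1.sub hY0
  -- integrability of h ∘ X from integrability of (h ∘ X) * (e g ∘ X)
  have int_of_mul_e : ∀ (g : GLabel) (h : (Fin q → ℝ) → ℝ), Measurable h →
      Integrable (fun ω => h (X ω) * e g (X ω)) P → Integrable (fun ω => h (X ω)) P := by
    intro g h hh hint
    refine Integrable.mono' (hint.abs.const_mul ε⁻¹) ((hh.comp hX).aestronglyMeasurable)
      (ae_of_all _ fun ω => ?_)
    rw [Real.norm_eq_abs, abs_mul, abs_of_nonneg (hεg g (X ω)).le, inv_mul_eq_div, le_div_iff₀ hε]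
    exact mul_le_mul_of_nonneg_left (hpos _ _) (abs_nonneg _)
  have hμNeN : Integrable (fun ω => ΔμN (X ω) * e GLabel.N (X ω)) P :=
    integrable_condExp.congr hΔμN.2
  have hμCeC : Integrable (fun ω => ΔμC (X ω) * e GLabel.C (X ω)) P :=
    integrable_condExp.congr hΔμC.2
  have hμN : Integrable (fun ω => ΔμN (X ω)) P := int_of_mul_e _ _ hΔμN.1 hμNeN
  have hμC : Integrable (fun ω => ΔμC (X ω)) P := int_of_mul_e _ _ hΔμC.1 hμCeC
  -- the correction terms (first and third summands of ψ): integrable with zero mean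
  have part1 : ∀ (g : GLabel) (μg : (Fin q → ℝ) → ℝ),
      Measurable μg →
      P[(fun ω => (Y1 ω - Y0 ω) * indG G g ω) | sigmaX X]
        =ᵐ[P] (fun ω => μg (X ω) * e g (X ω)) →
      Integrable (fun ω => μg (X ω)) P →
      Integrable (fun ω =>
        (e GLabel.T (X ω) / pT) * (indG G g ω / e g (X ω)) * ((Y1 ω - Y0 ω) - μg (X ω))) P ∧
      ∫ ω, (e GLabel.T (X ω) / pT) * (indG G g ω / e g (X ω)) * ((Y1 ω - Y0 ω) - μg (X ω)) ∂P
        = 0 := by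
    intro g μg hμgm hcond hμgint
    set b : (Fin q → ℝ) → ℝ := fun x => e GLabel.T x / (pT * e g x) with hb
    have hbm : Measurable b := (he GLabel.T).div (measurable_const.mul (he g))
    have hbbd : ∀ x, ‖b x‖ ≤ 1 / (pT * ε) := by
      intro x
      rw [Real.norm_eq_abs,
        abs_of_nonneg (div_nonneg (hεg _ x).le (mul_nonneg hpT.le (hεg g x).le))]
      exact div_le_div₀ zero_le_one (he1 _ x) (by positivity)
        (mul_le_mul_of_nonneg_left (hpos g x) hpT.le)
    have hZ1 : Integrable (fun ω => (Y1 ω - Y0 ω) * indG G g ω) P :=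
      integrable_mul_indG hG hΔY g
    have hA1 : Integrable (fun ω => b (X ω) * ((Y1 ω - Y0 ω) * indG G g ω)) P :=
      hZ1.bdd_mul ((hbm.comp hX).aestronglyMeasurable) (ae_of_all _ fun ω => hbbd (X ω))
    have hbμ : Integrable (fun ω => b (X ω) * μg (X ω)) P :=
      (mul_bdd_int hμgint ((hbm.comp hX).aestronglyMeasurable) _ (fun ω => hbbd (X ω))).congr
        (ae_of_all _ fun ω => mul_comm _ _)
    have hA2 : Integrable (fun ω => (b (X ω) * μg (X ω)) * indG G g ω) P :=
      integrable_mul_indG hG hbμ g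
    have hA2' : Integrable (fun ω => (fun x => b x * μg x) (X ω) * indG G g ω) P := hA2
    have hdecomp : (fun ω =>
        (e GLabel.T (X ω) / pT) * (indG G g ω / e g (X ω)) * ((Y1 ω - Y0 ω) - μg (X ω)))
        = fun ω => b (X ω) * ((Y1 ω - Y0 ω) * indG G g ω)
            - (b (X ω) * μg (X ω)) * indG G g ω := by
      funext ω
      simp only [hb]
      ring
    constructor
    · rw [hdecomp]; exact hA1.sub hA2
    · rw [hdecomp, integral_sub hA1 hA2]
      have e1 : ∫ ω, b (X ω) * ((Y1 ω - Y0 ω) * indG G g ω) ∂P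
          = ∫ ω, b (X ω) * (μg (X ω) * e g (X ω)) ∂P :=
        key_integral hX hbm hZ1 hA1 hcond
      have e2 : ∫ ω, (fun x => b x * μg x) (X ω) * indG G g ω ∂P
          = ∫ ω, (fun x => b x * μg x) (X ω) * e g (X ω) ∂P :=
        key_integral hX (hbm.mul hμgm) (integrable_indG hG g) hA2' (hprop g)
      rw [e1, e2, sub_eq_zero]
      exact integral_congr_ae (ae_of_all _ fun ω => (mul_assoc _ _ _).symm)
  -- the treated terms (second and fourth summands)
  have part2 : ∀ (h : (Fin q → ℝ) → ℝ), Measurable h →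
      Integrable (fun ω => h (X ω)) P →
      Integrable (fun ω => (indG G GLabel.T ω / pT) * h (X ω)) P ∧
      ∫ ω, (indG G GLabel.T ω / pT) * h (X ω) ∂P
        = (∫ ω, h (X ω) * e GLabel.T (X ω) ∂P) / pT := by
    intro h hm hint
    have hswap : (fun ω => (indG G GLabel.T ω / pT) * h (X ω))
        = fun ω => (fun x => h x / pT) (X ω) * indG G GLabel.T ω := by
      funext ω; simp only []; ring
    have hA : Integrable (fun ω => (fun x => h x / pT) (X ω) * indG G GLabel.T ω) P :=
      integrable_mul_indG hG (hint.div_const pT) GLabel.T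
    constructor
    · rw [hswap]; exact hA
    · rw [hswap, key_integral hX (hm.div_const pT) (integrable_indG hG GLabel.T) hA
        (hprop GLabel.T)]
      rw [show (fun ω => (fun x => h x / pT) (X ω) * e GLabel.T (X ω))
          = fun ω => (h (X ω) * e GLabel.T (X ω)) / pT from funext fun ω => by
            simp only []; ring]
      exact integral_div pT _
  obtain ⟨hF1int, hF1val⟩ := part1 GLabel.N ΔμN hΔμN.1 hΔμN.2 hμN
  obtain ⟨hF3int, hF3val⟩ := part1 GLabel.C ΔμC hΔμC.1 hΔμC.2 hμC
  obtain ⟨hF2int, hF2val⟩ := part2 ΔμN hΔμN.1 hμN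
  obtain ⟨hF4int, hF4val⟩ := part2 ΔμC hΔμC.1 hμC
  -- the last term
  have hTset : MeasurableSet {ω | G ω = GLabel.T} :=
    hG (show MeasurableSet ({GLabel.T} : Set GLabel) from trivial)
  have hindT : ∫ ω, indG G GLabel.T ω ∂P = pT := by
    rw [show (fun ω => indG G GLabel.T ω)
        = Set.indicator {ω | G ω = GLabel.T} (fun _ => (1:ℝ)) from funext fun ω => by
          by_cases h : G ω = GLabel.T <;> simp [indG, h]]
    rw [integral_indicator_const (1:ℝ) hTset]
    simp [hpTdef]
    rfl
  have hF5int : Integrable (fun ω => (indG G GLabel.T ω / pT) * (J / pT)) P := by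
    have := (integrable_indG (P := P) hG GLabel.T).mul_const (J / pT / pT)
    exact this.congr (ae_of_all _ fun ω => by ring)
  have hF5val : ∫ ω, (indG G GLabel.T ω / pT) * (J / pT) ∂P = J / pT := by
    rw [show (fun ω => (indG G GLabel.T ω / pT) * (J / pT))
        = fun ω => indG G GLabel.T ω * (J / pT / pT) from funext fun ω => by ring]
    rw [integral_mul_const, hindT]
    field_simp
  -- a.e. identification: ΔμN(X) - ΔμC(X) = -fT(X)
  have hNae : (fun ω => (Y1 ω - Y0 ω) * indG G GLabel.N ω)
      =ᵐ[P] (fun ω => (Y101 ω - Y000 ω) * indG G GLabel.N ω) := by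
    filter_upwards [hconsN, hcons0] with ω h1 h0
    by_cases h : G ω = GLabel.N
    · simp [indG, h, h1 h, h0]
    · simp [indG, h]
  have hCae : (fun ω => (Y1 ω - Y0 ω) * indG G GLabel.C ω)
      =ᵐ[P] (fun ω => (Y100 ω - Y000 ω) * indG G GLabel.C ω) := by
    filter_upwards [hconsC, hcons0] with ω h1 h0
    by_cases h : G ω = GLabel.C
    · simp [indG, h, h1 h, h0]
    · simp [indG, h]
  have intN1 : Integrable (fun ω => (Y101 ω - Y100 ω) * indG G GLabel.N ω) P :=
    integrable_mul_indG hG (hI01.sub hI00) GLabel.N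
  have intN2 : Integrable (fun ω => (Y100 ω - Y000 ω) * indG G GLabel.N ω) P :=
    integrable_mul_indG hG (hI00.sub hI000) GLabel.N
  have splitN : (fun ω => (Y101 ω - Y000 ω) * indG G GLabel.N ω)
      = (fun ω => (Y101 ω - Y100 ω) * indG G GLabel.N ω)
        + (fun ω => (Y100 ω - Y000 ω) * indG G GLabel.N ω) := by
    funext ω; simp only [Pi.add_apply]; ring
  have eNae : ∀ᵐ ω ∂P, ΔμN (X ω) = fN (X ω) + gN (X ω) := by
    have c1 : (fun ω => ΔμN (X ω) * e GLabel.N (X ω))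
        =ᵐ[P] fun ω => (fN (X ω) + gN (X ω)) * e GLabel.N (X ω) := by
      have step : P[(fun ω => (Y1 ω - Y0 ω) * indG G GLabel.N ω) | sigmaX X]
          =ᵐ[P] (fun ω => fN (X ω) * e GLabel.N (X ω))
              + (fun ω => gN (X ω) * e GLabel.N (X ω)) := by
        refine (condExp_congr_ae hNae).trans ?_
        rw [splitN]
        exact (condExp_add intN1 intN2 (sigmaX X)).trans
          (EventuallyEq.add hfN.2 hgN.2)
      refine (hΔμN.2.symm.trans step).trans (ae_of_all _ fun ω => ?_)
      simp only [Pi.add_apply]; ring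
    filter_upwards [c1] with ω h
    exact mul_right_cancel₀ (ne_of_gt (hεg GLabel.N (X ω))) h
  have eCae : ∀ᵐ ω ∂P, ΔμC (X ω) = gC (X ω) := by
    have c1 : (fun ω => ΔμC (X ω) * e GLabel.C (X ω))
        =ᵐ[P] fun ω => gC (X ω) * e GLabel.C (X ω) :=
      hΔμC.2.symm.trans ((condExp_congr_ae hCae).trans hgC.2)
    filter_upwards [c1] with ω h
    exact mul_right_cancel₀ (ne_of_gt (hεg GLabel.C (X ω))) h
  have hae : ∀ᵐ ω ∂P, ΔμN (X ω) - ΔμC (X ω) = -fT (X ω) := by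
    filter_upwards [eNae, eCae, hA5, hA6] with ω h1 h2 h5 h6
    rw [h1, h2, ← h6]; linarith
  -- value of the difference of treated terms
  have hμNeT : Integrable (fun ω => ΔμN (X ω) * e GLabel.T (X ω)) P :=
    mul_bdd_int hμN ((he GLabel.T).comp hX).aestronglyMeasurable 1
      (fun ω => by rw [Real.norm_eq_abs, abs_of_nonneg (hεg _ _).le]; exact he1 _ _)
  have hμCeT : Integrable (fun ω => ΔμC (X ω) * e GLabel.T (X ω)) P :=
    mul_bdd_int hμC ((he GLabel.T).comp hX).aestronglyMeasurable 1
      (fun ω => by rw [Real.norm_eq_abs, abs_of_nonneg (hεg _ _).le]; exact he1 _ _)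
  have hJeq : (∫ ω, ΔμN (X ω) * e GLabel.T (X ω) ∂P)
      - (∫ ω, ΔμC (X ω) * e GLabel.T (X ω) ∂P) = J := by
    rw [← integral_sub hμNeT hμCeT]
    have s1 : ∫ ω, (ΔμN (X ω) * e GLabel.T (X ω) - ΔμC (X ω) * e GLabel.T (X ω)) ∂P
        = ∫ ω, -(fT (X ω) * e GLabel.T (X ω)) ∂P := by
      refine integral_congr_ae ?_
      filter_upwards [hae] with ω h
      rw [show ΔμN (X ω) * e GLabel.T (X ω) - ΔμC (X ω) * e GLabel.T (X ω)
          = (ΔμN (X ω) - ΔμC (X ω)) * e GLabel.T (X ω) from by ring, h]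
      ring
    rw [s1, integral_neg]
    have s2 : ∫ ω, fT (X ω) * e GLabel.T (X ω) ∂P
        = ∫ ω, (Y110 ω - Y111 ω) * indG G GLabel.T ω ∂P := by
      rw [integral_congr_ae hfT.2.symm, integral_condExp hle]
    rw [s2, hJdef, ← integral_neg]
    exact integral_congr_ae (ae_of_all _ fun ω => by ring)
  -- assemble
  have hψeq : ψ = fun ω =>
      ((e GLabel.T (X ω) / pT) * (indG G GLabel.N ω / e GLabel.N (X ω)) *
          ((Y1 ω - Y0 ω) - ΔμN (X ω))
        + (indG G GLabel.T ω / pT) * ΔμN (X ω))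
        - ((e GLabel.T (X ω) / pT) * (indG G GLabel.C ω / e GLabel.C (X ω)) *
            ((Y1 ω - Y0 ω) - ΔμC (X ω))
          + (indG G GLabel.T ω / pT) * ΔμC (X ω))
        - (indG G GLabel.T ω / pT) * (J / pT) := funext fun ω => hψ ω
  have hF12int : Integrable (fun ω =>
      (e GLabel.T (X ω) / pT) * (indG G GLabel.N ω / e GLabel.N (X ω)) *
          ((Y1 ω - Y0 ω) - ΔμN (X ω))
        + (indG G GLabel.T ω / pT) * ΔμN (X ω)) P := hF1int.add hF2int
  have hF34int : Integrable (fun ω =>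
      (e GLabel.T (X ω) / pT) * (indG G GLabel.C ω / e GLabel.C (X ω)) *
          ((Y1 ω - Y0 ω) - ΔμC (X ω))
        + (indG G GLabel.T ω / pT) * ΔμC (X ω)) P := hF3int.add hF4int
  have hF1234int : Integrable (fun ω =>
      ((e GLabel.T (X ω) / pT) * (indG G GLabel.N ω / e GLabel.N (X ω)) *
          ((Y1 ω - Y0 ω) - ΔμN (X ω))
        + (indG G GLabel.T ω / pT) * ΔμN (X ω))
      - ((e GLabel.T (X ω) / pT) * (indG G GLabel.C ω / e GLabel.C (X ω)) *
          ((Y1 ω - Y0 ω) - ΔμC (X ω))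
        + (indG G GLabel.T ω / pT) * ΔμC (X ω))) P := hF12int.sub hF34int
  constructor
  · rw [hψeq]
    exact hF1234int.sub hF5int
  · rw [hψeq]
    rw [integral_sub hF1234int hF5int, integral_sub hF12int hF34int,
      integral_add hF1int hF2int, integral_add hF3int hF4int,
      hF1val, hF2val, hF3val, hF4val, hF5val]
    rw [zero_add, zero_add, div_sub_div_same, hJeq, sub_self]
end

section
/- (Lemma 1, almost-sure consistency of the IPW estimator.) Let (Y₀ᵢ, Y₁ᵢ, Gᵢ, Xᵢ)_{i≥1} be an i.i.d. sequence with the same distribution as (Y₀, Y₁, G, X), and set ΔYᵢ := Y₁ᵢ − Y₀ᵢ. Under consistency of the potential outcomes, positivity, and Assumptions (A5) and (A6), the sample averages (1/n)·Σ_{i=1}^{n} (e_T(Xᵢ)/p_T)·( 1{Gᵢ=N}/e_N(Xᵢ) − 1{Gᵢ=C}/e_C(Xᵢ) )·ΔYᵢ converge almost surely, as n → ∞, to δ := E[(Y₁^{(1,1)} − Y₁^{(1,0)})·1{G=T}]/p_T. -/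
open MeasureTheory ProbabilityTheory Filter Topology

lemma indG_meas {Ω : Type} [MeasurableSpace Ω] {G : Ω → GLabel} (hG : Measurable G)
    (g : GLabel) : Measurable (indG G g) := by
  unfold indG
  have hsg : MeasurableSet ({x | x = g} : Set GLabel) := MeasurableSpace.measurableSet_top
  exact Measurable.ite (hG hsg) measurable_const measurable_const

lemma indG_le {Ω : Type} (G : Ω → GLabel) (g : GLabel) (ω : Ω) : ‖indG G g ω‖ ≤ 1 := by
  unfold indG; split <;> simp

/-- Tower / pull-out property: for bounded measurable `h`,
`∫ h(X)·(Z·1{G=g}) = ∫ h(X)·(f(X)·e_g(X))`. -/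
lemma tower_aux {Ω : Type} [inst : MeasurableSpace Ω] (P : Measure Ω) [IsProbabilityMeasure P]
    {q : ℕ} (X : Ω → (Fin q → ℝ)) (hX : Measurable X)
    (G : Ω → GLabel) (hG : Measurable G)
    (e : GLabel → (Fin q → ℝ) → ℝ)
    (h : (Fin q → ℝ) → ℝ) (hh : Measurable h) (c : ℝ) (hc : ∀ x, ‖h x‖ ≤ c)
    (g : GLabel) (Z : Ω → ℝ) (hZ : Integrable Z P)
    (f : (Fin q → ℝ) → ℝ)
    (hcond : P[(fun ω => Z ω * indG G g ω) | sigmaX X] =ᵐ[P]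
      (fun ω => f (X ω) * e g (X ω))) :
    ∫ ω, h (X ω) * (Z ω * indG G g ω) ∂P = ∫ ω, h (X ω) * (f (X ω) * e g (X ω)) ∂P := by
  have hm : sigmaX X ≤ inst := hX.comap_le
  have hXm : Measurable[sigmaX X] X := Measurable.of_comap_le le_rfl
  have hhX : StronglyMeasurable[sigmaX X] (fun ω => h (X ω)) :=
    (hh.comp hXm).stronglyMeasurable
  have hZg : Integrable (fun ω => Z ω * indG G g ω) P := by
    have := hZ.bdd_mul (c := 1)
      ((indG_meas hG g).aestronglyMeasurable)
      (Filter.Eventually.of_forall (indG_le G g))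
    simpa [mul_comm] using this
  set hx : Ω → ℝ := fun ω => h (X ω) with hhxdef
  set ZI : Ω → ℝ := fun ω => Z ω * indG G g ω with hZIdef
  have hpull : P[(hx * ZI) | sigmaX X] =ᵐ[P] hx * P[ZI | sigmaX X] :=
    condExp_stronglyMeasurable_mul_of_bound hm hhX hZg c
      (Filter.Eventually.of_forall fun ω => hc (X ω))
  calc ∫ ω, h (X ω) * (Z ω * indG G g ω) ∂P
      = ∫ ω, (MeasureTheory.condExp (sigmaX X) P (hx * ZI)) ω ∂P := by
        rw [integral_condExp hm]; rfl
    _ = ∫ ω, h (X ω) * (f (X ω) * e g (X ω)) ∂P := by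
        refine integral_congr_ae (hpull.trans ?_)
        filter_upwards [hcond] with ω hω
        simp only [Pi.mul_apply, hhxdef]
        rw [hω]

/-- The IPW summand as a function of the data vector. -/
noncomputable def auxF {q : ℕ} (e : GLabel → (Fin q → ℝ) → ℝ) (pT : ℝ)
    (p : ℝ × ℝ × GLabel × (Fin q → ℝ)) : ℝ :=
  (e GLabel.T p.2.2.2 / pT) *
    ((if p.2.2.1 = GLabel.N then (1:ℝ) else 0) / e GLabel.N p.2.2.2 -
      (if p.2.2.1 = GLabel.C then (1:ℝ) else 0) / e GLabel.C p.2.2.2) *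
    (p.2.1 - p.1)

lemma auxF_meas {q : ℕ} (e : GLabel → (Fin q → ℝ) → ℝ) (he : ∀ g, Measurable (e g))
    (pT : ℝ) : Measurable (auxF e pT) := by
  have h222 : Measurable (fun p : ℝ × ℝ × GLabel × (Fin q → ℝ) => p.2.2.2) :=
    measurable_snd.snd.snd
  have hlab : Measurable (fun p : ℝ × ℝ × GLabel × (Fin q → ℝ) => p.2.2.1) :=
    measurable_snd.snd.fst
  have hsN : MeasurableSet ({x | x = GLabel.N} : Set GLabel) :=
    MeasurableSpace.measurableSet_top
  have hsC : MeasurableSet ({x | x = GLabel.C} : Set GLabel) :=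
    MeasurableSpace.measurableSet_top
  have hiN : Measurable (fun p : ℝ × ℝ × GLabel × (Fin q → ℝ) =>
      if p.2.2.1 = GLabel.N then (1:ℝ) else 0) :=
    Measurable.ite (hlab hsN) measurable_const measurable_const
  have hiC : Measurable (fun p : ℝ × ℝ × GLabel × (Fin q → ℝ) =>
      if p.2.2.1 = GLabel.C then (1:ℝ) else 0) :=
    Measurable.ite (hlab hsC) measurable_const measurable_const
  exact ((((he GLabel.T).comp h222).div measurable_const).mul
    ((hiN.div ((he GLabel.N).comp h222)).sub (hiC.div ((he GLabel.C).comp h222)))).mul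
    (measurable_snd.fst.sub measurable_fst)

theorem stmt_13
    {Ω : Type} [MeasurableSpace Ω] (P : Measure Ω) [IsProbabilityMeasure P]
    {q : ℕ} (X : Ω → (Fin q → ℝ)) (hX : Measurable X)
    (G : Ω → GLabel) (hG : Measurable G)
    (Y0 Y1 : Ω → ℝ) (hY0 : Integrable Y0 P) (hY1 : Integrable Y1 P)
    (e : GLabel → (Fin q → ℝ) → ℝ) (he : ∀ g, Measurable (e g))
    (he1 : ∀ g x, e g x ≤ 1)
    (hprop : ∀ g : GLabel,
      P[(fun ω => indG G g ω) | sigmaX X] =ᵐ[P] (fun ω => e g (X ω)))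
    (ε : ℝ) (hε : 0 < ε) (hpos : ∀ g x, ε ≤ e g x)
    (hpT : 0 < (P {ω | G ω = GLabel.T}).toReal)
    (Y110 Y111 Y101 Y100 Y000 : Ω → ℝ)
    (hI10 : Integrable Y110 P) (hI11 : Integrable Y111 P)
    (hI01 : Integrable Y101 P) (hI00 : Integrable Y100 P) (hI000 : Integrable Y000 P)
    (hconsT : ∀ᵐ ω ∂P, G ω = GLabel.T → Y1 ω = Y110 ω)
    (hconsN : ∀ᵐ ω ∂P, G ω = GLabel.N → Y1 ω = Y101 ω)
    (hconsC : ∀ᵐ ω ∂P, G ω = GLabel.C → Y1 ω = Y100 ω)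
    (hcons0 : Y0 =ᵐ[P] Y000)
    (fT fN : (Fin q → ℝ) → ℝ)
    (hfT : IsCondVersion P X G e GLabel.T (fun ω => Y110 ω - Y111 ω) fT)
    (hfN : IsCondVersion P X G e GLabel.N (fun ω => Y101 ω - Y100 ω) fN)
    (hA5 : ∀ᵐ ω ∂P, fT (X ω) + fN (X ω) = 0)
    (gN gC : (Fin q → ℝ) → ℝ)
    (hgN : IsCondVersion P X G e GLabel.N (fun ω => Y100 ω - Y000 ω) gN)
    (hgC : IsCondVersion P X G e GLabel.C (fun ω => Y100 ω - Y000 ω) gC)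
    (hA6 : ∀ᵐ ω ∂P, gN (X ω) = gC (X ω))
    (V : ℕ → Ω → ℝ × ℝ × GLabel × (Fin q → ℝ))
    (hVmeas : ∀ i, Measurable (V i))
    (hVindep : iIndepFun V P)
    (hVid : ∀ i, IdentDistrib (V i) (fun ω => (Y0 ω, Y1 ω, G ω, X ω)) P P)
    :
    ∀ᵐ ω ∂P, Tendsto (fun n : ℕ => (n : ℝ)⁻¹ * ∑ i ∈ Finset.range n,
        (e GLabel.T (V i ω).2.2.2 / (P {ω | G ω = GLabel.T}).toReal) *
          ((if (V i ω).2.2.1 = GLabel.N then (1:ℝ) else 0) / e GLabel.N (V i ω).2.2.2 -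
            (if (V i ω).2.2.1 = GLabel.C then (1:ℝ) else 0) / e GLabel.C (V i ω).2.2.2) *
          ((V i ω).2.1 - (V i ω).1))
      atTop (𝓝 ((∫ ω, (Y111 ω - Y110 ω) * indG G GLabel.T ω ∂P) / (P {ω | G ω = GLabel.T}).toReal)) := by
  set pT : ℝ := (P {ω | G ω = GLabel.T}).toReal with hpTdef
  have hene : ∀ g x, e g x ≠ 0 := fun g x => ne_of_gt (lt_of_lt_of_le hε (hpos g x))
  have hFmeas : Measurable (auxF e pT) := auxF_meas e he pT
  -- the data vector
  set W : Ω → ℝ × ℝ × GLabel × (Fin q → ℝ) := fun ω => (Y0 ω, Y1 ω, G ω, X ω) with hWdef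
  have hWae : AEMeasurable W P :=
    hY0.1.aemeasurable.prodMk (hY1.1.aemeasurable.prodMk
      (hG.aemeasurable.prodMk hX.aemeasurable))
  -- weights
  set wN : (Fin q → ℝ) → ℝ := fun x => e GLabel.T x / e GLabel.N x with hwNdef
  set wC : (Fin q → ℝ) → ℝ := fun x => e GLabel.T x / e GLabel.C x with hwCdef
  have hwNbd : ∀ x, ‖wN x‖ ≤ 1 / ε := by
    intro x
    rw [Real.norm_eq_abs, abs_of_nonneg (div_nonneg (le_of_lt (lt_of_lt_of_le hε (hpos _ _)))
      (le_of_lt (lt_of_lt_of_le hε (hpos _ _))))]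
    exact div_le_div₀ (zero_le_one) (he1 _ _) hε (hpos _ _)
  have hwCbd : ∀ x, ‖wC x‖ ≤ 1 / ε := by
    intro x
    rw [Real.norm_eq_abs, abs_of_nonneg (div_nonneg (le_of_lt (lt_of_lt_of_le hε (hpos _ _)))
      (le_of_lt (lt_of_lt_of_le hε (hpos _ _))))]
    exact div_le_div₀ (zero_le_one) (he1 _ _) hε (hpos _ _)
  have hwNmeas : Measurable wN := (he _).div (he _)
  have hwCmeas : Measurable wC := (he _).div (he _)
  -- integrability of Z * indG for integrable Z
  have hZind : ∀ (Z : Ω → ℝ), Integrable Z P → ∀ g,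
      Integrable (fun ω => Z ω * indG G g ω) P := by
    intro Z hZ g
    have := hZ.bdd_mul (c := 1) ((indG_meas hG g).aestronglyMeasurable)
      (Filter.Eventually.of_forall (indG_le G g))
    simpa [mul_comm] using this
  -- the two pieces
  set φN : Ω → ℝ := fun ω => wN (X ω) * ((Y1 ω - Y0 ω) * indG G GLabel.N ω) with hφNdef
  set φC : Ω → ℝ := fun ω => wC (X ω) * ((Y1 ω - Y0 ω) * indG G GLabel.C ω) with hφCdef
  have hφNint : Integrable φN P :=
    (hZind _ (hY1.sub hY0) GLabel.N).bdd_mul ((hwNmeas.comp hX).aestronglyMeasurable)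
      (Filter.Eventually.of_forall fun ω => hwNbd (X ω))
  have hφCint : Integrable φC P :=
    (hZind _ (hY1.sub hY0) GLabel.C).bdd_mul ((hwCmeas.comp hX).aestronglyMeasurable)
      (Filter.Eventually.of_forall fun ω => hwCbd (X ω))
  -- ∫ φN
  have hN1 : ∫ ω, wN (X ω) * ((Y101 ω - Y100 ω) * indG G GLabel.N ω) ∂P
      = ∫ ω, wN (X ω) * (fN (X ω) * e GLabel.N (X ω)) ∂P :=
    tower_aux P X hX G hG e wN hwNmeas (1/ε) hwNbd GLabel.N _ (hI01.sub hI00) fN hfN.2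
  have hN2 : ∫ ω, wN (X ω) * ((Y100 ω - Y000 ω) * indG G GLabel.N ω) ∂P
      = ∫ ω, wN (X ω) * (gN (X ω) * e GLabel.N (X ω)) ∂P :=
    tower_aux P X hX G hG e wN hwNmeas (1/ε) hwNbd GLabel.N _ (hI00.sub hI000) gN hgN.2
  have hC1 : ∫ ω, wC (X ω) * ((Y100 ω - Y000 ω) * indG G GLabel.C ω) ∂P
      = ∫ ω, wC (X ω) * (gC (X ω) * e GLabel.C (X ω)) ∂P :=
    tower_aux P X hX G hG e wC hwCmeas (1/ε) hwCbd GLabel.C _ (hI00.sub hI000) gC hgC.2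
  have hT1 : ∫ ω, (1:ℝ) * ((Y110 ω - Y111 ω) * indG G GLabel.T ω) ∂P
      = ∫ ω, (1:ℝ) * (fT (X ω) * e GLabel.T (X ω)) ∂P :=
    tower_aux P X hX G hG e (fun _ => 1) measurable_const 1
      (fun _ => by simp) GLabel.T _ (hI10.sub hI11) fT hfT.2
  -- ∫ φN = ∫ e_T f_N + ∫ e_T g_N
  have hφNval : ∫ ω, φN ω ∂P
      = (∫ ω, e GLabel.T (X ω) * fN (X ω) ∂P) + ∫ ω, e GLabel.T (X ω) * gN (X ω) ∂P := by
    have step1 : ∫ ω, φN ω ∂P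
        = ∫ ω, (wN (X ω) * ((Y101 ω - Y100 ω) * indG G GLabel.N ω)
            + wN (X ω) * ((Y100 ω - Y000 ω) * indG G GLabel.N ω)) ∂P := by
      refine integral_congr_ae ?_
      filter_upwards [hconsN, hcons0] with ω h1 h0
      by_cases hg : G ω = GLabel.N
      · simp only [hφNdef, indG, if_pos hg, h1 hg, h0]; ring
      · simp only [hφNdef, indG, if_neg hg]; ring
    have i1 : Integrable (fun ω => wN (X ω) * ((Y101 ω - Y100 ω) * indG G GLabel.N ω)) P :=
      (hZind _ (hI01.sub hI00) GLabel.N).bdd_mul ((hwNmeas.comp hX).aestronglyMeasurable)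
        (Filter.Eventually.of_forall fun ω => hwNbd (X ω))
    have i2 : Integrable (fun ω => wN (X ω) * ((Y100 ω - Y000 ω) * indG G GLabel.N ω)) P :=
      (hZind _ (hI00.sub hI000) GLabel.N).bdd_mul ((hwNmeas.comp hX).aestronglyMeasurable)
        (Filter.Eventually.of_forall fun ω => hwNbd (X ω))
    rw [step1, integral_add i1 i2, hN1, hN2]
    congr 1
    · refine integral_congr_ae (Filter.Eventually.of_forall fun ω => ?_)
      have h0 := hene GLabel.N (X ω)
      simp only [hwNdef]
      field_simp
    · refine integral_congr_ae (Filter.Eventually.of_forall fun ω => ?_)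
      have h0 := hene GLabel.N (X ω)
      simp only [hwNdef]
      field_simp
  -- ∫ φC = ∫ e_T g_C
  have hφCval : ∫ ω, φC ω ∂P = ∫ ω, e GLabel.T (X ω) * gC (X ω) ∂P := by
    have step1 : ∫ ω, φC ω ∂P
        = ∫ ω, wC (X ω) * ((Y100 ω - Y000 ω) * indG G GLabel.C ω) ∂P := by
      refine integral_congr_ae ?_
      filter_upwards [hconsC, hcons0] with ω h1 h0
      by_cases hg : G ω = GLabel.C
      · simp only [hφCdef, indG, if_pos hg, h1 hg, h0]
      · simp only [hφCdef, indG, if_neg hg]; ring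
    rw [step1, hC1]
    refine integral_congr_ae (Filter.Eventually.of_forall fun ω => ?_)
    have h0 := hene GLabel.C (X ω)
    simp only [hwCdef]
    field_simp
  -- A6 : ∫ e_T g_N = ∫ e_T g_C
  have hA6int : ∫ ω, e GLabel.T (X ω) * gN (X ω) ∂P
      = ∫ ω, e GLabel.T (X ω) * gC (X ω) ∂P := by
    refine integral_congr_ae ?_
    filter_upwards [hA6] with ω h
    rw [h]
  -- A5 : ∫ e_T f_N = - ∫ e_T f_T
  have hA5int : ∫ ω, e GLabel.T (X ω) * fN (X ω) ∂P
      = - ∫ ω, e GLabel.T (X ω) * fT (X ω) ∂P := by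
    rw [← integral_neg]
    refine integral_congr_ae ?_
    filter_upwards [hA5] with ω h
    have : fN (X ω) = - fT (X ω) := by linarith
    rw [this]; ring
  -- ∫ e_T f_T = ∫ (Y110 - Y111) 1{G=T}
  have hTval : ∫ ω, e GLabel.T (X ω) * fT (X ω) ∂P
      = ∫ ω, (Y110 ω - Y111 ω) * indG G GLabel.T ω ∂P := by
    have h1 : ∫ ω, (Y110 ω - Y111 ω) * indG G GLabel.T ω ∂P
        = ∫ ω, (1:ℝ) * ((Y110 ω - Y111 ω) * indG G GLabel.T ω) ∂P := by simp
    have h2 : ∫ ω, (1:ℝ) * (fT (X ω) * e GLabel.T (X ω)) ∂P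
        = ∫ ω, e GLabel.T (X ω) * fT (X ω) ∂P := by
      refine integral_congr_ae (Filter.Eventually.of_forall fun ω => ?_)
      ring
    rw [h1, hT1, h2]
  -- combine : ∫ auxF ∘ W = δ
  have hEW : ∫ ω, auxF e pT (W ω) ∂P
      = (∫ ω, (Y111 ω - Y110 ω) * indG G GLabel.T ω ∂P) / pT := by
    have hptw : ∀ ω, auxF e pT (W ω) = pT⁻¹ * (φN ω - φC ω) := by
      intro ω
      simp only [auxF, hWdef, hφNdef, hφCdef, hwNdef, hwCdef, indG]
      ring
    calc ∫ ω, auxF e pT (W ω) ∂P = ∫ ω, pT⁻¹ * (φN ω - φC ω) ∂P :=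
          integral_congr_ae (Filter.Eventually.of_forall hptw)
      _ = pT⁻¹ * ((∫ ω, φN ω ∂P) - ∫ ω, φC ω ∂P) := by
          rw [integral_const_mul, integral_sub hφNint hφCint]
      _ = pT⁻¹ * ((∫ ω, e GLabel.T (X ω) * fN (X ω) ∂P)) := by
          rw [hφNval, hφCval, hA6int]; ring
      _ = pT⁻¹ * (∫ ω, (Y111 ω - Y110 ω) * indG G GLabel.T ω ∂P) := by
          rw [hA5int, hTval]
          have hneg : ∫ ω, (Y111 ω - Y110 ω) * indG G GLabel.T ω ∂P
              = - ∫ ω, (Y110 ω - Y111 ω) * indG G GLabel.T ω ∂P := by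
            rw [← integral_neg]
            exact integral_congr_ae (Filter.Eventually.of_forall fun ω => by ring)
          rw [hneg]
      _ = (∫ ω, (Y111 ω - Y110 ω) * indG G GLabel.T ω ∂P) / pT := by
          rw [inv_mul_eq_div]
  -- integrability of auxF ∘ W
  have hFWint : Integrable (fun ω => auxF e pT (W ω)) P := by
    set C : ℝ := (1 / pT) * (2 / ε) with hCdef
    have hC0 : 0 ≤ C := by positivity
    refine Integrable.mono ((hY1.sub hY0).const_mul C)
      ((hFmeas.comp_aemeasurable hWae).aestronglyMeasurable)
      (Filter.Eventually.of_forall fun ω => ?_)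
    have ha : ‖e GLabel.T (X ω) / pT‖ ≤ 1 / pT := by
      rw [Real.norm_eq_abs, abs_of_nonneg (div_nonneg
        (le_of_lt (lt_of_lt_of_le hε (hpos _ _))) hpT.le)]
      exact div_le_div₀ (zero_le_one) (he1 _ _) hpT (le_refl _)
    have hbN : ‖(if G ω = GLabel.N then (1:ℝ) else 0) / e GLabel.N (X ω)‖ ≤ 1 / ε := by
      rw [Real.norm_eq_abs]
      have h1 : (0:ℝ) ≤ (if G ω = GLabel.N then (1:ℝ) else 0) := by split <;> norm_num
      have h2 : (if G ω = GLabel.N then (1:ℝ) else 0) ≤ 1 := by split <;> norm_num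
      rw [abs_of_nonneg (div_nonneg h1 (le_of_lt (lt_of_lt_of_le hε (hpos _ _))))]
      exact div_le_div₀ zero_le_one h2 hε (hpos _ _)
    have hbC : ‖(if G ω = GLabel.C then (1:ℝ) else 0) / e GLabel.C (X ω)‖ ≤ 1 / ε := by
      rw [Real.norm_eq_abs]
      have h1 : (0:ℝ) ≤ (if G ω = GLabel.C then (1:ℝ) else 0) := by split <;> norm_num
      have h2 : (if G ω = GLabel.C then (1:ℝ) else 0) ≤ 1 := by split <;> norm_num
      rw [abs_of_nonneg (div_nonneg h1 (le_of_lt (lt_of_lt_of_le hε (hpos _ _))))]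
      exact div_le_div₀ zero_le_one h2 hε (hpos _ _)
    have hb : ‖(if G ω = GLabel.N then (1:ℝ) else 0) / e GLabel.N (X ω)
        - (if G ω = GLabel.C then (1:ℝ) else 0) / e GLabel.C (X ω)‖ ≤ 2 / ε := by
      calc _ ≤ _ := norm_sub_le _ _
        _ ≤ 1/ε + 1/ε := add_le_add hbN hbC
        _ = 2/ε := by ring
    calc ‖auxF e pT (W ω)‖
        = ‖e GLabel.T (X ω) / pT‖ * ‖(if G ω = GLabel.N then (1:ℝ) else 0) / e GLabel.N (X ω)
            - (if G ω = GLabel.C then (1:ℝ) else 0) / e GLabel.C (X ω)‖ * ‖Y1 ω - Y0 ω‖ := by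
          simp only [auxF, hWdef, norm_mul]
      _ ≤ (1 / pT) * (2 / ε) * ‖Y1 ω - Y0 ω‖ :=
          mul_le_mul_of_nonneg_right
            (mul_le_mul ha hb (norm_nonneg _) (by positivity)) (norm_nonneg _)
      _ = ‖C * (Y1 ω - Y0 ω)‖ := by
          rw [norm_mul, Real.norm_of_nonneg hC0, hCdef]
  -- strong law
  set Xi : ℕ → Ω → ℝ := fun i ω => auxF e pT (V i ω) with hXidef
  have hid : ∀ i, IdentDistrib (Xi i) (fun ω => auxF e pT (W ω)) P P :=
    fun i => (hVid i).comp hFmeas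
  have hint : Integrable (Xi 0) P := (hid 0).integrable_iff.mpr hFWint
  have hindep : Pairwise (Function.onFun (IndepFun · · P) Xi) :=
    fun i j hij => (hVindep.indepFun hij).comp hFmeas hFmeas
  have hident : ∀ i, IdentDistrib (Xi i) (Xi 0) P P :=
    fun i => (hid i).trans (hid 0).symm
  have hlim := strong_law_ae_real Xi hint hindep hident
  have hval : ∫ ω, Xi 0 ω ∂P
      = (∫ ω, (Y111 ω - Y110 ω) * indG G GLabel.T ω ∂P) / pT := by
    rw [(hid 0).integral_eq, hEW]
  rw [hval] at hlim
  filter_upwards [hlim] with ω hω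
  have heq : (fun n : ℕ => (n : ℝ)⁻¹ * ∑ i ∈ Finset.range n,
        (e GLabel.T (V i ω).2.2.2 / pT) *
          ((if (V i ω).2.2.1 = GLabel.N then (1:ℝ) else 0) / e GLabel.N (V i ω).2.2.2 -
            (if (V i ω).2.2.1 = GLabel.C then (1:ℝ) else 0) / e GLabel.C (V i ω).2.2.2) *
          ((V i ω).2.1 - (V i ω).1))
      = fun n : ℕ => (∑ i ∈ Finset.range n, Xi i ω) / n := by
    funext n
    rw [div_eq_inv_mul]
    rfl
  rw [heq]
  exact hω
end
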